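/- arXiv:2411.19877 — 2 statements merged into one kernel-verified Lean document; each statement's English description precedes it below -/
import Mathlib

section
/- Assume x_0 ∈ range(A^T). The RK-RR iterates converge to the ridge solution x_μ up to a finite horizon: E||x_t - x_μ||^2 ≤ 2[μ^2(1 - κ_dem^{-2})]^t ||x_0 - x_μ||^2 + (2μ/((1+μ)λ)) ||b - A x_μ||^2. -/
open Matrix Finset
noncomputable section

/-- Squared Euclidean norm of a vector. -/
def vnormSq {k : ℕ} (x : Fin k → ℝ) : ℝ := ∑ i, x i ^ 2

/-- Squared Frobenius norm of a matrix. -/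
def frobSq {n d : ℕ} (A : Matrix (Fin n) (Fin d) ℝ) : ℝ := ∑ i, vnormSq (A i)

/-- Row sampling probability ‖a_i‖²/‖A‖_F² used by randomized Kaczmarz. -/
def rowProb {n d : ℕ} (A : Matrix (Fin n) (Fin d) ℝ) (i : Fin n) : ℝ := vnormSq (A i) / frobSq A

/-- Spectral norm (ℓ²-operator norm) of a matrix. -/
def matSpectralNorm {n d : ℕ} (M : Matrix (Fin n) (Fin d) ℝ) : ℝ :=
  ‖LinearMap.toContinuousLinearMap (Matrix.toEuclideanLin M)‖

/-- The four Penrose conditions characterizing the Moore–Penrose pseudoinverse. -/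
def IsMoorePenrose {n d : ℕ} (A : Matrix (Fin n) (Fin d) ℝ) (Ap : Matrix (Fin d) (Fin n) ℝ) : Prop :=
  A * Ap * A = A ∧ Ap * A * Ap = Ap ∧ (A * Ap)ᵀ = A * Ap ∧ (Ap * A)ᵀ = Ap * A

/-- Demmel condition number κ_dem = ‖A⁺‖ ‖A‖_F. -/
def kdem {n d : ℕ} (A : Matrix (Fin n) (Fin d) ℝ) (Ap : Matrix (Fin d) (Fin n) ℝ) : ℝ :=
  matSpectralNorm Ap * Real.sqrt (frobSq A)

/-- One randomized Kaczmarz update using row i. -/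
def rkStep {n d : ℕ} (A : Matrix (Fin n) (Fin d) ℝ) (b : Fin n → ℝ) (i : Fin n) (x : Fin d → ℝ) :
    Fin d → ℝ := x + ((b i - A i ⬝ᵥ x) / vnormSq (A i)) • A i

/-- Randomized Kaczmarz iterates along a fixed path ω of row indices. -/
def rkSeq {n d : ℕ} (A : Matrix (Fin n) (Fin d) ℝ) (b : Fin n → ℝ) (x0 : Fin d → ℝ)
    (ω : ℕ → Fin n) : ℕ → Fin d → ℝ
  | 0 => x0
  | t + 1 => rkStep A b (ω t) (rkSeq A b x0 ω t)

/-- Extend a finite path of indices to an infinite one. -/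
def extendPath {n T : ℕ} [NeZero n] (ω : Fin T → Fin n) : ℕ → Fin n :=
  fun s => if h : s < T then ω ⟨s, h⟩ else 0

/-- Probability of a finite path of i.i.d. row indices. -/
def pathWeight {n d T : ℕ} (A : Matrix (Fin n) (Fin d) ℝ) (ω : Fin T → Fin n) : ℝ :=
  ∏ t, rowProb A (ω t)

/-- The expected one-step Kaczmarz contraction matrix I - AᵀA/‖A‖_F². -/
def kacMat {n d : ℕ} (A : Matrix (Fin n) (Fin d) ℝ) : Matrix (Fin d) (Fin d) ℝ :=
  1 - (frobSq A)⁻¹ • (Aᵀ * A)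

/-- x lies in the row space range(Aᵀ). -/
def inRowSpace {n d : ℕ} (A : Matrix (Fin n) (Fin d) ℝ) (x : Fin d → ℝ) : Prop :=
  ∃ u : Fin n → ℝ, x = Aᵀ *ᵥ u

/-- RK-RR iterates: Kaczmarz step followed by weight decay by μ. -/
def rrSeq {n d : ℕ} (A : Matrix (Fin n) (Fin d) ℝ) (b : Fin n → ℝ) (μ : ℝ) (x0 : Fin d → ℝ)
    (ω : ℕ → Fin n) : ℕ → Fin d → ℝ
  | 0 => x0
  | t + 1 => μ • rkStep A b (ω t) (rrSeq A b μ x0 ω t)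

/-- Orthogonal projection step (I - a aᵀ/‖a‖²) x for row a = A i. -/
def projStep {n d : ℕ} (A : Matrix (Fin n) (Fin d) ℝ) (i : Fin n) (x : Fin d → ℝ) : Fin d → ℝ :=
  x - ((A i ⬝ᵥ x) / vnormSq (A i)) • A i

/-- RK-RR bias sequence m_{t+1} = μ (I - a aᵀ/‖a‖²) m_t. -/
def biasSeq {n d : ℕ} (A : Matrix (Fin n) (Fin d) ℝ) (μ : ℝ) (m0 : Fin d → ℝ)
    (ω : ℕ → Fin n) : ℕ → Fin d → ℝ
  | 0 => m0
  | t + 1 => μ • projStep A (ω t) (biasSeq A μ m0 ω t)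

/-- RK-RR variance sequence v_{t+1} = μ(I - aaᵀ/‖a‖²)v_t + μ (b_i - aᵀx_μ)a/‖a‖² - (1-μ)x_μ. -/
def varSeq {n d : ℕ} (A : Matrix (Fin n) (Fin d) ℝ) (b : Fin n → ℝ) (μ : ℝ) (xmu : Fin d → ℝ)
    (ω : ℕ → Fin n) : ℕ → Fin d → ℝ
  | 0 => 0
  | t + 1 => μ • projStep A (ω t) (varSeq A b μ xmu ω t)
      + (μ * ((b (ω t) - A (ω t) ⬝ᵥ xmu) / vnormSq (A (ω t)))) • A (ω t)
      - (1 - μ) • xmu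

/-- Covariance matrix Σ = I_m + v 1_m 1_mᵀ. -/
def covM (m : ℕ) (v : ℝ) : Matrix (Fin m) (Fin m) ℝ := 1 + v • Matrix.of fun _ _ => 1

/-- Block Σ_{S,T} of the covariance matrix Σ = I + v 1 1ᵀ. -/
def subBlock {m : ℕ} (v : ℝ) (S T : Finset (Fin m)) : Matrix ↥S ↥T ℝ :=
  (covM m v).submatrix (fun i => i.1) (fun j => j.1)

/-- A deterministic adaptive algorithm that accesses at most t entries of b
(given full access to A) and outputs an estimate of the least-squares solution. -/
structure RowAccessAlg (d t : ℕ) where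
  query : (n : ℕ) → Matrix (Fin n) (Fin d) ℝ → (j : Fin t) → (Fin (j : ℕ) → ℝ) → Fin n
  output : (n : ℕ) → Matrix (Fin n) (Fin d) ℝ → (Fin t → ℝ) → Fin d → ℝ

/-- The successive answers to the algorithm's adaptive queries. -/
def RowAccessAlg.answers {d t : ℕ} (alg : RowAccessAlg d t) (n : ℕ)
    (A : Matrix (Fin n) (Fin d) ℝ) (b : Fin n → ℝ) : (j : ℕ) → j < t → ℝ
  | j, h => b (alg.query n A ⟨j, h⟩ fun i => alg.answers n A b i (i.isLt.trans h))
  termination_by j _ => j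

/-- The algorithm's output estimate on the problem (A, b). -/
def RowAccessAlg.run {d t : ℕ} (alg : RowAccessAlg d t) (n : ℕ)
    (A : Matrix (Fin n) (Fin d) ℝ) (b : Fin n → ℝ) : Fin d → ℝ :=
  alg.output n A fun j => alg.answers n A b j j.isLt


variable {n d : ℕ}

lemma vnormSq_nonneg (x : Fin d → ℝ) : 0 ≤ vnormSq x :=
  Finset.sum_nonneg fun _ _ => sq_nonneg _

lemma vnormSq_pos {x : Fin d → ℝ} (hx : x ≠ 0) : 0 < vnormSq x := by
  obtain ⟨j, hj⟩ := Function.ne_iff.mp hx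
  exact Finset.sum_pos' (fun i _ => sq_nonneg _) ⟨j, Finset.mem_univ _, by have : x j ≠ 0 := hj; positivity⟩

lemma vnormSq_smul (c : ℝ) (x : Fin d → ℝ) : vnormSq (c • x) = c ^ 2 * vnormSq x := by
  simp [vnormSq, Finset.mul_sum, mul_pow]

lemma vnormSq_add (x y : Fin d → ℝ) :
    vnormSq (x + y) = vnormSq x + 2 * (x ⬝ᵥ y) + vnormSq y := by
  simp only [vnormSq, dotProduct, Pi.add_apply, Finset.mul_sum, ← Finset.sum_add_distrib]
  exact Finset.sum_congr rfl fun i _ => by ring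

lemma dot_self (x : Fin d → ℝ) : x ⬝ᵥ x = vnormSq x := by
  simp [vnormSq, dotProduct, sq]

lemma vnormSq_add_le (x y : Fin d → ℝ) :
    vnormSq (x + y) ≤ 2 * vnormSq x + 2 * vnormSq y := by
  simp only [vnormSq, Pi.add_apply, Finset.mul_sum, ← Finset.sum_add_distrib]
  exact Finset.sum_le_sum fun i _ => by nlinarith [sq_nonneg (x i - y i)]

lemma dot_transpose_mulVec (A : Matrix (Fin n) (Fin d) ℝ) (x : Fin d → ℝ) (y : Fin n → ℝ) :
    x ⬝ᵥ (Aᵀ *ᵥ y) = (A *ᵥ x) ⬝ᵥ y := by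
  simp only [dotProduct, Matrix.mulVec, Matrix.transpose_apply, dotProduct,
    Finset.mul_sum, Finset.sum_mul]
  rw [Finset.sum_comm]
  exact Finset.sum_congr rfl fun i _ => Finset.sum_congr rfl fun j _ => by ring

lemma vnormSq_mulVec (A : Matrix (Fin n) (Fin d) ℝ) (x : Fin d → ℝ) :
    vnormSq (A *ᵥ x) = ∑ i, (A i ⬝ᵥ x) ^ 2 := by
  simp [vnormSq, Matrix.mulVec]

lemma transpose_mulVec_eq_sum (A : Matrix (Fin n) (Fin d) ℝ) (y : Fin n → ℝ) :
    Aᵀ *ᵥ y = ∑ i, y i • A i := by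
  funext j
  simp only [Matrix.mulVec, dotProduct, Matrix.transpose_apply, Finset.sum_apply,
    Pi.smul_apply, smul_eq_mul]
  exact Finset.sum_congr rfl fun i _ => by ring



variable {n d : ℕ}

lemma frobSq_pos [NeZero n] {A : Matrix (Fin n) (Fin d) ℝ} (hrows : ∀ i, A i ≠ 0) :
    0 < frobSq A :=
  Finset.sum_pos' (fun i _ => vnormSq_nonneg _)
    ⟨0, Finset.mem_univ _, vnormSq_pos (hrows 0)⟩

lemma rowProb_nonneg (A : Matrix (Fin n) (Fin d) ℝ) (i : Fin n) : 0 ≤ rowProb A i := by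
  unfold rowProb
  have h1 := vnormSq_nonneg (A i)
  have h2 : (0:ℝ) ≤ frobSq A := Finset.sum_nonneg fun _ _ => vnormSq_nonneg _
  positivity

lemma sum_rowProb {A : Matrix (Fin n) (Fin d) ℝ} (hF : frobSq A ≠ 0) :
    ∑ i, rowProb A i = 1 := by
  simp only [rowProb, ← Finset.sum_div]
  rw [show ∑ i, vnormSq (A i) = frobSq A from rfl, div_self hF]

lemma pathWeight_nonneg (A : Matrix (Fin n) (Fin d) ℝ) {T : ℕ} (ω : Fin T → Fin n) :
    0 ≤ pathWeight A ω :=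
  Finset.prod_nonneg fun i _ => rowProb_nonneg A _

lemma sum_pathWeight {A : Matrix (Fin n) (Fin d) ℝ} (hF : frobSq A ≠ 0) (T : ℕ) :
    ∑ ω : Fin T → Fin n, pathWeight A ω = 1 := by
  have h := Finset.prod_univ_sum (fun _ : Fin T => (Finset.univ : Finset (Fin n)))
    (fun _ i => rowProb A i)
  rw [← Fintype.piFinset_univ]
  calc ∑ ω ∈ Fintype.piFinset fun _ : Fin T => (Finset.univ : Finset (Fin n)),
        pathWeight A ω
      = ∏ _i : Fin T, ∑ j : Fin n, rowProb A j := h.symm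
    _ = 1 := by simp [sum_rowProb hF]

lemma sum_snoc {T : ℕ} (f : (Fin (T + 1) → Fin n) → ℝ) :
    ∑ ω : Fin (T + 1) → Fin n, f ω
      = ∑ ω : Fin T → Fin n, ∑ i : Fin n, f (Fin.snoc ω i) := by
  rw [← (Fin.snocEquiv (fun _ => Fin n)).sum_comp f, Fintype.sum_prod_type]
  rw [Finset.sum_comm]
  rfl

lemma pathWeight_snoc (A : Matrix (Fin n) (Fin d) ℝ) {T : ℕ} (ω : Fin T → Fin n) (i : Fin n) :
    pathWeight A (Fin.snoc ω i) = pathWeight A ω * rowProb A i := by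
  simp [pathWeight, Fin.prod_univ_castSucc]

lemma extendPath_snoc_lt [NeZero n] {T : ℕ} (ω : Fin T → Fin n) (i : Fin n)
    {s : ℕ} (hs : s < T) :
    extendPath (Fin.snoc ω i) s = extendPath ω s := by
  have hs' : s < T + 1 := hs.trans (Nat.lt_succ_self T)
  simp only [extendPath, dif_pos hs, dif_pos hs']
  have : (⟨s, hs'⟩ : Fin (T+1)) = Fin.castSucc ⟨s, hs⟩ := rfl
  rw [this, Fin.snoc_castSucc]

lemma extendPath_snoc_last [NeZero n] {T : ℕ} (ω : Fin T → Fin n) (i : Fin n) :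
    extendPath (Fin.snoc ω i) T = i := by
  simp only [extendPath, dif_pos (Nat.lt_succ_self T)]
  have : (⟨T, Nat.lt_succ_self T⟩ : Fin (T+1)) = Fin.last T := rfl
  rw [this, Fin.snoc_last]



variable {n d : ℕ}

lemma rrSeq_congr (A : Matrix (Fin n) (Fin d) ℝ) (b : Fin n → ℝ) (μ : ℝ) (x0 : Fin d → ℝ)
    {ω ω' : ℕ → Fin n} : ∀ t, (∀ s, s < t → ω s = ω' s) →
    rrSeq A b μ x0 ω t = rrSeq A b μ x0 ω' t
  | 0, _ => rfl
  | t + 1, h => by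
    simp only [rrSeq, h t (Nat.lt_succ_self t),
      rrSeq_congr A b μ x0 t (fun s hs => h s (hs.trans (Nat.lt_succ_self t)))]

lemma biasSeq_congr (A : Matrix (Fin n) (Fin d) ℝ) (μ : ℝ) (m0 : Fin d → ℝ)
    {ω ω' : ℕ → Fin n} : ∀ t, (∀ s, s < t → ω s = ω' s) →
    biasSeq A μ m0 ω t = biasSeq A μ m0 ω' t
  | 0, _ => rfl
  | t + 1, h => by
    simp only [biasSeq, h t (Nat.lt_succ_self t),
      biasSeq_congr A μ m0 t (fun s hs => h s (hs.trans (Nat.lt_succ_self t)))]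

lemma varSeq_congr (A : Matrix (Fin n) (Fin d) ℝ) (b : Fin n → ℝ) (μ : ℝ) (xmu : Fin d → ℝ)
    {ω ω' : ℕ → Fin n} : ∀ t, (∀ s, s < t → ω s = ω' s) →
    varSeq A b μ xmu ω t = varSeq A b μ xmu ω' t
  | 0, _ => rfl
  | t + 1, h => by
    simp only [varSeq, h t (Nat.lt_succ_self t),
      varSeq_congr A b μ xmu t (fun s hs => h s (hs.trans (Nat.lt_succ_self t)))]

/-- deterministic bias-variance decomposition -/
lemma rr_decomp (A : Matrix (Fin n) (Fin d) ℝ) (b : Fin n → ℝ) (μ : ℝ)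
    (xmu x0 : Fin d → ℝ) (ω : ℕ → Fin n) : ∀ t,
    rrSeq A b μ x0 ω t - xmu
      = biasSeq A μ (x0 - xmu) ω t + varSeq A b μ xmu ω t
  | 0 => by simp [rrSeq, biasSeq, varSeq]
  | t + 1 => by
    have ih := rr_decomp A b μ xmu x0 ω t
    have hx : rrSeq A b μ x0 ω t
        = xmu + (biasSeq A μ (x0 - xmu) ω t + varSeq A b μ xmu ω t) := by
      rw [← ih]; abel
    funext j
    simp only [rrSeq, rkStep, biasSeq, varSeq, projStep, hx, Pi.add_apply, Pi.sub_apply,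
      Pi.smul_apply, smul_eq_mul, dotProduct_add, add_div, sub_div]
    ring

lemma dot_projStep (A : Matrix (Fin n) (Fin d) ℝ) {i : Fin n} (hi : A i ≠ 0) (x : Fin d → ℝ) :
    A i ⬝ᵥ projStep A i x = 0 := by
  have h := (vnormSq_pos hi).ne'
  simp only [projStep, dotProduct_sub, dotProduct_smul, smul_eq_mul, dot_self]
  field_simp
  ring

lemma vnormSq_projStep (A : Matrix (Fin n) (Fin d) ℝ) {i : Fin n} (hi : A i ≠ 0)
    (x : Fin d → ℝ) :
    vnormSq (projStep A i x) = vnormSq x - (A i ⬝ᵥ x) ^ 2 / vnormSq (A i) := by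
  have h := (vnormSq_pos hi).ne'
  have : projStep A i x = x + (-((A i ⬝ᵥ x) / vnormSq (A i))) • A i := by
    funext j; simp [projStep, sub_eq_add_neg]
  rw [this, vnormSq_add, vnormSq_smul]
  simp only [dotProduct_smul, smul_eq_mul, dot_self, neg_sq]
  rw [show A i ⬝ᵥ x = x ⬝ᵥ A i from dotProduct_comm _ _]
  field_simp
  ring

lemma inRowSpace_sub (A : Matrix (Fin n) (Fin d) ℝ) {x y : Fin d → ℝ}
    (hx : inRowSpace A x) (hy : inRowSpace A y) : inRowSpace A (x - y) := by
  obtain ⟨u, rfl⟩ := hx; obtain ⟨v, rfl⟩ := hy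
  exact ⟨u - v, by rw [Matrix.mulVec_sub]⟩

lemma inRowSpace_smul (A : Matrix (Fin n) (Fin d) ℝ) (c : ℝ) {x : Fin d → ℝ}
    (hx : inRowSpace A x) : inRowSpace A (c • x) := by
  obtain ⟨u, rfl⟩ := hx
  exact ⟨c • u, by rw [Matrix.mulVec_smul]⟩

lemma inRowSpace_row (A : Matrix (Fin n) (Fin d) ℝ) (i : Fin n) : inRowSpace A (A i) := by
  refine ⟨Pi.single i 1, ?_⟩
  funext j
  simp [Matrix.mulVec, dotProduct, Pi.single_apply]

lemma inRowSpace_projStep (A : Matrix (Fin n) (Fin d) ℝ) (i : Fin n) {x : Fin d → ℝ}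
    (hx : inRowSpace A x) : inRowSpace A (projStep A i x) :=
  inRowSpace_sub A hx (inRowSpace_smul A _ (inRowSpace_row A i))

lemma inRowSpace_biasSeq (A : Matrix (Fin n) (Fin d) ℝ) (μ : ℝ) {m0 : Fin d → ℝ}
    (h0 : inRowSpace A m0) (ω : ℕ → Fin n) : ∀ t, inRowSpace A (biasSeq A μ m0 ω t)
  | 0 => h0
  | t + 1 => inRowSpace_smul A μ
      (inRowSpace_projStep A _ (inRowSpace_biasSeq A μ h0 ω t))



variable {n d : ℕ}

lemma norm_equiv_symm_sq {k : ℕ} (z : Fin k → ℝ) :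
    ‖(WithLp.equiv 2 (Fin k → ℝ)).symm z‖ ^ 2 = vnormSq z := by
  rw [EuclideanSpace.norm_eq, Real.sq_sqrt (by positivity)]
  simp [vnormSq, Real.norm_eq_abs, sq_abs]

lemma vnormSq_mulVec_le_spectral {k l : ℕ} (M : Matrix (Fin k) (Fin l) ℝ) (y : Fin l → ℝ) :
    vnormSq (M *ᵥ y) ≤ matSpectralNorm M ^ 2 * vnormSq y := by
  set L := LinearMap.toContinuousLinearMap (Matrix.toEuclideanLin M) with hLdef
  have hL : L ((WithLp.equiv 2 (Fin l → ℝ)).symm y)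
      = (WithLp.equiv 2 (Fin k → ℝ)).symm (M *ᵥ y) := by
    rw [hLdef]
    rw [LinearMap.coe_toContinuousLinearMap']
    rw [Matrix.toEuclideanLin_apply]
    simp
  have h := L.le_opNorm ((WithLp.equiv 2 (Fin l → ℝ)).symm y)
  rw [hL] at h
  have h2 : ‖(WithLp.equiv 2 (Fin k → ℝ)).symm (M *ᵥ y)‖ ^ 2
      ≤ (‖L‖ * ‖(WithLp.equiv 2 (Fin l → ℝ)).symm y‖) ^ 2 := by
    apply sq_le_sq' _ h
    have := norm_nonneg ((WithLp.equiv 2 (Fin k → ℝ)).symm (M *ᵥ y))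
    nlinarith [norm_nonneg L, norm_nonneg ((WithLp.equiv 2 (Fin l → ℝ)).symm y)]
  rw [norm_equiv_symm_sq, mul_pow, norm_equiv_symm_sq] at h2
  exact h2

lemma rowspace_vnormSq_le (A : Matrix (Fin n) (Fin d) ℝ) (Ap : Matrix (Fin d) (Fin n) ℝ)
    (hAp : IsMoorePenrose A Ap) {x : Fin d → ℝ} (hx : inRowSpace A x) :
    vnormSq x ≤ matSpectralNorm Ap ^ 2 * vnormSq (A *ᵥ x) := by
  obtain ⟨u, rfl⟩ := hx
  have hmat : Ap * A * Aᵀ = Aᵀ := by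
    calc Ap * A * Aᵀ = (Ap * A)ᵀ * Aᵀ := by rw [hAp.2.2.2]
      _ = (A * (Ap * A))ᵀ := (Matrix.transpose_mul _ _).symm
      _ = (A * Ap * A)ᵀ := by rw [Matrix.mul_assoc]
      _ = Aᵀ := by rw [hAp.1]
  have key : Ap *ᵥ (A *ᵥ (Aᵀ *ᵥ u)) = Aᵀ *ᵥ u := by
    rw [Matrix.mulVec_mulVec, Matrix.mulVec_mulVec, hmat]
  calc vnormSq (Aᵀ *ᵥ u) = vnormSq (Ap *ᵥ (A *ᵥ (Aᵀ *ᵥ u))) := by rw [key]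
    _ ≤ matSpectralNorm Ap ^ 2 * vnormSq (A *ᵥ (Aᵀ *ᵥ u)) := vnormSq_mulVec_le_spectral _ _

lemma vnormSq_mulVec_le_frob (A : Matrix (Fin n) (Fin d) ℝ) (x : Fin d → ℝ) :
    vnormSq (A *ᵥ x) ≤ frobSq A * vnormSq x := by
  rw [vnormSq_mulVec, frobSq, Finset.sum_mul]
  refine Finset.sum_le_sum fun i _ => ?_
  have := Finset.sum_mul_sq_le_sq_mul_sq Finset.univ (A i) x
  simpa [dotProduct, vnormSq] using this

lemma spectral_sq_pos [NeZero n] {A : Matrix (Fin n) (Fin d) ℝ} (hrows : ∀ i, A i ≠ 0)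
    {Ap : Matrix (Fin d) (Fin n) ℝ} (hAp : IsMoorePenrose A Ap) :
    0 < matSpectralNorm Ap ^ 2 := by
  have h1 := vnormSq_pos (hrows 0)
  have h2 := rowspace_vnormSq_le A Ap hAp (inRowSpace_row A 0)
  nlinarith [vnormSq_nonneg (A *ᵥ A 0), sq_nonneg (matSpectralNorm Ap)]

lemma kdem_sq (A : Matrix (Fin n) (Fin d) ℝ) (Ap : Matrix (Fin d) (Fin n) ℝ) :
    kdem A Ap ^ 2 = matSpectralNorm Ap ^ 2 * frobSq A := by
  have hF : (0:ℝ) ≤ frobSq A := Finset.sum_nonneg fun _ _ => vnormSq_nonneg _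
  rw [kdem, mul_pow, Real.sq_sqrt hF]

lemma kdem_sq_pos [NeZero n] {A : Matrix (Fin n) (Fin d) ℝ} (hrows : ∀ i, A i ≠ 0)
    {Ap : Matrix (Fin d) (Fin n) ℝ} (hAp : IsMoorePenrose A Ap) :
    0 < kdem A Ap ^ 2 := by
  rw [kdem_sq]
  exact mul_pos (spectral_sq_pos hrows hAp) (frobSq_pos hrows)

lemma one_le_kdem_sq [NeZero n] {A : Matrix (Fin n) (Fin d) ℝ} (hrows : ∀ i, A i ≠ 0)
    {Ap : Matrix (Fin d) (Fin n) ℝ} (hAp : IsMoorePenrose A Ap) :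
    1 ≤ kdem A Ap ^ 2 := by
  have h1 := vnormSq_pos (hrows 0)
  have h2 := rowspace_vnormSq_le A Ap hAp (inRowSpace_row A 0)
  have h3 := vnormSq_mulVec_le_frob A (A 0)
  rw [kdem_sq]
  nlinarith [spectral_sq_pos hrows hAp]

lemma sum_rowProb_vnormSq_projStep [NeZero n] {A : Matrix (Fin n) (Fin d) ℝ}
    (hrows : ∀ i, A i ≠ 0) (x : Fin d → ℝ) :
    ∑ i, rowProb A i * vnormSq (projStep A i x)
      = vnormSq x - vnormSq (A *ᵥ x) / frobSq A := by
  have hF := (frobSq_pos hrows).ne'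
  have key : ∀ i : Fin n, rowProb A i * vnormSq (projStep A i x)
      = rowProb A i * vnormSq x - (A i ⬝ᵥ x) ^ 2 / frobSq A := by
    intro i
    have hi := (vnormSq_pos (hrows i)).ne'
    rw [vnormSq_projStep A (hrows i)]
    unfold rowProb
    field_simp
  rw [Finset.sum_congr rfl (fun i _ => key i), Finset.sum_sub_distrib, ← Finset.sum_mul,
    sum_rowProb hF, one_mul, vnormSq_mulVec, Finset.sum_div]

lemma bias_step [NeZero n] {A : Matrix (Fin n) (Fin d) ℝ} (hrows : ∀ i, A i ≠ 0)
    {Ap : Matrix (Fin d) (Fin n) ℝ} (hAp : IsMoorePenrose A Ap) (μ : ℝ)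
    {x : Fin d → ℝ} (hx : inRowSpace A x) :
    ∑ i, rowProb A i * vnormSq (μ • projStep A i x)
      ≤ μ ^ 2 * (1 - (kdem A Ap ^ 2)⁻¹) * vnormSq x := by
  have hF := frobSq_pos hrows
  have hsp := spectral_sq_pos hrows hAp
  have hκ := rowspace_vnormSq_le A Ap hAp hx
  have hstep : ∑ i, rowProb A i * vnormSq (μ • projStep A i x)
      = μ ^ 2 * (vnormSq x - vnormSq (A *ᵥ x) / frobSq A) := by
    rw [← sum_rowProb_vnormSq_projStep hrows x, Finset.mul_sum]
    exact Finset.sum_congr rfl fun i _ => by rw [vnormSq_smul]; ring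
  rw [hstep]
  have hinv : (kdem A Ap ^ 2)⁻¹ * vnormSq x ≤ vnormSq (A *ᵥ x) / frobSq A := by
    rw [kdem_sq, inv_mul_le_iff₀ (by positivity), mul_assoc]
    calc vnormSq x ≤ matSpectralNorm Ap ^ 2 * vnormSq (A *ᵥ x) := hκ
      _ = matSpectralNorm Ap ^ 2 * (frobSq A * (vnormSq (A *ᵥ x) / frobSq A)) := by
          rw [mul_div_cancel₀ _ hF.ne']
  nlinarith [sq_nonneg μ]



variable {n d : ℕ}

lemma sum_snoc' {M : Type*} [AddCommMonoid M] {T : ℕ} (f : (Fin (T + 1) → Fin n) → M) :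
    ∑ ω : Fin (T + 1) → Fin n, f ω
      = ∑ ω : Fin T → Fin n, ∑ i : Fin n, f (Fin.snoc ω i) := by
  rw [← (Fin.snocEquiv (fun _ => Fin n)).sum_comp f, Fintype.sum_prod_type]
  rw [Finset.sum_comm]
  rfl

lemma inv_kdem_le_one [NeZero n] {A : Matrix (Fin n) (Fin d) ℝ} (hrows : ∀ i, A i ≠ 0)
    {Ap : Matrix (Fin d) (Fin n) ℝ} (hAp : IsMoorePenrose A Ap) :
    (kdem A Ap ^ 2)⁻¹ ≤ 1 := by
  have h1 := one_le_kdem_sq hrows hAp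
  have h2 := kdem_sq_pos hrows hAp
  have h3 := mul_inv_cancel₀ h2.ne'
  nlinarith [inv_nonneg.mpr h2.le]

lemma rho_nonneg [NeZero n] {A : Matrix (Fin n) (Fin d) ℝ} (hrows : ∀ i, A i ≠ 0)
    {Ap : Matrix (Fin d) (Fin n) ℝ} (hAp : IsMoorePenrose A Ap) (μ : ℝ) :
    0 ≤ μ ^ 2 * (1 - (kdem A Ap ^ 2)⁻¹) := by
  have := inv_kdem_le_one hrows hAp
  nlinarith [sq_nonneg μ]

lemma bias_bound [NeZero n] {A : Matrix (Fin n) (Fin d) ℝ} (hrows : ∀ i, A i ≠ 0)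
    {Ap : Matrix (Fin d) (Fin n) ℝ} (hAp : IsMoorePenrose A Ap) (b : Fin n → ℝ)
    (μ : ℝ) {m0 : Fin d → ℝ} (h0 : inRowSpace A m0) :
    ∀ t : ℕ, ∑ ω : Fin t → Fin n,
        pathWeight A ω * vnormSq (biasSeq A μ m0 (extendPath ω) t)
      ≤ (μ ^ 2 * (1 - (kdem A Ap ^ 2)⁻¹)) ^ t * vnormSq m0
  | 0 => by simp [pathWeight, biasSeq]
  | t + 1 => by
    rw [sum_snoc']
    have hρ0 := rho_nonneg hrows hAp μ
    have step : ∀ ω : Fin t → Fin n,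
        ∑ i : Fin n, pathWeight A (Fin.snoc ω i)
            * vnormSq (biasSeq A μ m0 (extendPath (Fin.snoc ω i)) (t + 1))
          ≤ pathWeight A ω * (μ ^ 2 * (1 - (kdem A Ap ^ 2)⁻¹)
              * vnormSq (biasSeq A μ m0 (extendPath ω) t)) := by
      intro ω
      have hcong : ∀ i : Fin n, biasSeq A μ m0 (extendPath (Fin.snoc ω i)) (t + 1)
          = μ • projStep A i (biasSeq A μ m0 (extendPath ω) t) := by
        intro i
        show μ • projStep A (extendPath (Fin.snoc ω i) t)
            (biasSeq A μ m0 (extendPath (Fin.snoc ω i)) t) = _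
        rw [extendPath_snoc_last,
          biasSeq_congr A μ m0 t (fun s hs => extendPath_snoc_lt ω i hs)]
      calc ∑ i : Fin n, pathWeight A (Fin.snoc ω i)
            * vnormSq (biasSeq A μ m0 (extendPath (Fin.snoc ω i)) (t + 1))
          = pathWeight A ω * ∑ i : Fin n, rowProb A i
              * vnormSq (μ • projStep A i (biasSeq A μ m0 (extendPath ω) t)) := by
            rw [Finset.mul_sum]
            exact Finset.sum_congr rfl fun i _ => by
              rw [pathWeight_snoc, hcong i]; ring
        _ ≤ pathWeight A ω * (μ ^ 2 * (1 - (kdem A Ap ^ 2)⁻¹)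
              * vnormSq (biasSeq A μ m0 (extendPath ω) t)) :=
            mul_le_mul_of_nonneg_left
              (bias_step hrows hAp μ (inRowSpace_biasSeq A μ h0 _ t))
              (pathWeight_nonneg A ω)
    calc ∑ ω : Fin t → Fin n, ∑ i : Fin n, pathWeight A (Fin.snoc ω i)
            * vnormSq (biasSeq A μ m0 (extendPath (Fin.snoc ω i)) (t + 1))
        ≤ ∑ ω : Fin t → Fin n, pathWeight A ω * (μ ^ 2 * (1 - (kdem A Ap ^ 2)⁻¹)
            * vnormSq (biasSeq A μ m0 (extendPath ω) t)) :=
          Finset.sum_le_sum fun ω _ => step ω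
      _ = μ ^ 2 * (1 - (kdem A Ap ^ 2)⁻¹) * ∑ ω : Fin t → Fin n,
            pathWeight A ω * vnormSq (biasSeq A μ m0 (extendPath ω) t) := by
          rw [Finset.mul_sum]; exact Finset.sum_congr rfl fun ω _ => by ring
      _ ≤ μ ^ 2 * (1 - (kdem A Ap ^ 2)⁻¹)
            * ((μ ^ 2 * (1 - (kdem A Ap ^ 2)⁻¹)) ^ t * vnormSq m0) :=
          mul_le_mul_of_nonneg_left (bias_bound hrows hAp b μ h0 t) hρ0
      _ = (μ ^ 2 * (1 - (kdem A Ap ^ 2)⁻¹)) ^ (t + 1) * vnormSq m0 := by ring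



variable {n d : ℕ}

lemma vnormSq_sub (x y : Fin d → ℝ) :
    vnormSq (x - y) = vnormSq x - 2 * (x ⬝ᵥ y) + vnormSq y := by
  have : x - y = x + (-1 : ℝ) • y := by funext j; simp; ring
  rw [this, vnormSq_add, vnormSq_smul, dotProduct_smul]
  simp; ring

lemma dot_mulVec_mulVec (A : Matrix (Fin n) (Fin d) ℝ) (v x : Fin d → ℝ) :
    (A *ᵥ v) ⬝ᵥ (A *ᵥ x) = ∑ i, (A i ⬝ᵥ v) * (A i ⬝ᵥ x) := rfl

lemma transpose_mulVec_apply (A : Matrix (Fin n) (Fin d) ℝ) (w : Fin n → ℝ) (j : Fin d) :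
    (Aᵀ *ᵥ w) j = ∑ i, w i * A i j := by
  rw [transpose_mulVec_eq_sum]; simp

lemma sum_rowProb_proj_dot [NeZero n] {A : Matrix (Fin n) (Fin d) ℝ}
    (hrows : ∀ i, A i ≠ 0) (v x : Fin d → ℝ) :
    ∑ i, rowProb A i * (projStep A i v ⬝ᵥ x)
      = v ⬝ᵥ x - ((A *ᵥ v) ⬝ᵥ (A *ᵥ x)) / frobSq A := by
  have hF := (frobSq_pos hrows).ne'
  have key : ∀ i : Fin n, rowProb A i * (projStep A i v ⬝ᵥ x)
      = rowProb A i * (v ⬝ᵥ x) - ((A i ⬝ᵥ v) * (A i ⬝ᵥ x)) / frobSq A := by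
    intro i
    have hi := (vnormSq_pos (hrows i)).ne'
    simp only [projStep, sub_dotProduct, smul_dotProduct, smul_eq_mul]
    unfold rowProb
    field_simp
  rw [Finset.sum_congr rfl fun i _ => key i, Finset.sum_sub_distrib, ← Finset.sum_mul,
    sum_rowProb hF, one_mul, dot_mulVec_mulVec, Finset.sum_div]

/-- per-index expansion of the variance one-step squared norm -/
lemma var_term_expand [NeZero n] {A : Matrix (Fin n) (Fin d) ℝ} (hrows : ∀ i, A i ≠ 0)
    (b : Fin n → ℝ) (μ : ℝ) (xmu v : Fin d → ℝ) (i : Fin n) :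
    rowProb A i * vnormSq (μ • projStep A i v
        + (μ * ((b i - A i ⬝ᵥ xmu) / vnormSq (A i))) • A i - (1 - μ) • xmu)
      = μ ^ 2 * (rowProb A i * vnormSq (projStep A i v))
        - 2 * μ * (1 - μ) * (rowProb A i * (projStep A i v ⬝ᵥ xmu))
        + μ ^ 2 * ((b i - A i ⬝ᵥ xmu) ^ 2) / frobSq A
        - 2 * μ * (1 - μ) * ((b i - A i ⬝ᵥ xmu) * (A i ⬝ᵥ xmu)) / frobSq A
        + (1 - μ) ^ 2 * (rowProb A i * vnormSq xmu) := by
  have hF := (frobSq_pos hrows).ne'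
  have hi := (vnormSq_pos (hrows i)).ne'
  have horth : projStep A i v ⬝ᵥ A i = 0 := by
    rw [dotProduct_comm]; exact dot_projStep A (hrows i) v
  rw [add_sub_assoc, vnormSq_add, vnormSq_sub, vnormSq_smul, vnormSq_smul, vnormSq_smul]
  rw [dotProduct_sub, dotProduct_smul, dotProduct_smul, smul_dotProduct, smul_dotProduct]
  rw [smul_eq_mul, smul_eq_mul, smul_eq_mul, smul_eq_mul, horth, smul_dotProduct, smul_eq_mul]
  unfold rowProb
  field_simp
  simp only [dotProduct_smul, smul_eq_mul]
  ring

lemma var_step_le [NeZero n] {A : Matrix (Fin n) (Fin d) ℝ} (hrows : ∀ i, A i ≠ 0)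
    (b : Fin n → ℝ) {μ lam : ℝ} (hμ0 : 0 < μ) (hμ1 : μ < 1)
    (hlam : lam = (1 - μ) / μ * frobSq A)
    {xmu : Fin d → ℝ} (hxmu : Aᵀ *ᵥ (b - A *ᵥ xmu) = lam • xmu) (v : Fin d → ℝ) :
    ∑ i, rowProb A i * vnormSq (μ • projStep A i v
        + (μ * ((b i - A i ⬝ᵥ xmu) / vnormSq (A i))) • A i - (1 - μ) • xmu)
      ≤ μ ^ 2 * vnormSq v + μ ^ 2 * vnormSq (b - A *ᵥ xmu) / frobSq A
        - 2 * μ * (1 - μ)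
            * (v ⬝ᵥ (xmu - (frobSq A)⁻¹ • (Aᵀ *ᵥ (A *ᵥ xmu)))) := by
  have hFpos := frobSq_pos hrows
  have hF := hFpos.ne'
  -- the five separate sums
  have h1 : ∑ i, μ ^ 2 * (rowProb A i * vnormSq (projStep A i v))
      = μ ^ 2 * (vnormSq v - vnormSq (A *ᵥ v) / frobSq A) := by
    rw [← Finset.mul_sum, sum_rowProb_vnormSq_projStep hrows v]
  have h2 : ∑ i, 2 * μ * (1 - μ) * (rowProb A i * (projStep A i v ⬝ᵥ xmu))
      = 2 * μ * (1 - μ) * (v ⬝ᵥ xmu - ((A *ᵥ v) ⬝ᵥ (A *ᵥ xmu)) / frobSq A) := by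
    rw [← Finset.mul_sum, sum_rowProb_proj_dot hrows v xmu]
  have h3 : ∑ i, μ ^ 2 * ((b i - A i ⬝ᵥ xmu) ^ 2) / frobSq A
      = μ ^ 2 * vnormSq (b - A *ᵥ xmu) / frobSq A := by
    rw [← Finset.sum_div, ← Finset.mul_sum]
    congr 2
  have h4 : ∑ i, 2 * μ * (1 - μ) * ((b i - A i ⬝ᵥ xmu) * (A i ⬝ᵥ xmu)) / frobSq A
      = 2 * (1 - μ) ^ 2 * vnormSq xmu := by
    have hAr : ∑ i, (b i - A i ⬝ᵥ xmu) * (A i ⬝ᵥ xmu) = lam * vnormSq xmu := by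
      have : ∑ i, (b i - A i ⬝ᵥ xmu) * (A i ⬝ᵥ xmu)
          = xmu ⬝ᵥ (Aᵀ *ᵥ (b - A *ᵥ xmu)) := by
        rw [dot_transpose_mulVec, dotProduct_comm]
        rfl
      rw [this, hxmu, dotProduct_smul, smul_eq_mul, dot_self]
    rw [← Finset.sum_div, ← Finset.mul_sum, hAr, hlam]
    field_simp
  have h5 : ∑ i, (1 - μ) ^ 2 * (rowProb A i * vnormSq xmu)
      = (1 - μ) ^ 2 * vnormSq xmu := by
    rw [← Finset.mul_sum, ← Finset.sum_mul, sum_rowProb hF, one_mul]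
  have hvc : v ⬝ᵥ (xmu - (frobSq A)⁻¹ • (Aᵀ *ᵥ (A *ᵥ xmu)))
      = v ⬝ᵥ xmu - ((A *ᵥ v) ⬝ᵥ (A *ᵥ xmu)) / frobSq A := by
    rw [dotProduct_sub, dotProduct_smul, smul_eq_mul, dot_transpose_mulVec]
    ring
  calc ∑ i, rowProb A i * vnormSq (μ • projStep A i v
        + (μ * ((b i - A i ⬝ᵥ xmu) / vnormSq (A i))) • A i - (1 - μ) • xmu)
      = ∑ i, (μ ^ 2 * (rowProb A i * vnormSq (projStep A i v))
        - 2 * μ * (1 - μ) * (rowProb A i * (projStep A i v ⬝ᵥ xmu))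
        + μ ^ 2 * ((b i - A i ⬝ᵥ xmu) ^ 2) / frobSq A
        - 2 * μ * (1 - μ) * ((b i - A i ⬝ᵥ xmu) * (A i ⬝ᵥ xmu)) / frobSq A
        + (1 - μ) ^ 2 * (rowProb A i * vnormSq xmu)) :=
        Finset.sum_congr rfl fun i _ => var_term_expand hrows b μ xmu v i
    _ = μ ^ 2 * (vnormSq v - vnormSq (A *ᵥ v) / frobSq A)
        - 2 * μ * (1 - μ) * (v ⬝ᵥ xmu - ((A *ᵥ v) ⬝ᵥ (A *ᵥ xmu)) / frobSq A)
        + μ ^ 2 * vnormSq (b - A *ᵥ xmu) / frobSq A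
        - 2 * (1 - μ) ^ 2 * vnormSq xmu
        + (1 - μ) ^ 2 * vnormSq xmu := by
        rw [← h1, ← h2, ← h3, ← h4, ← h5]
        rw [Finset.sum_add_distrib, Finset.sum_sub_distrib, Finset.sum_add_distrib,
          Finset.sum_sub_distrib]
    _ ≤ μ ^ 2 * vnormSq v + μ ^ 2 * vnormSq (b - A *ᵥ xmu) / frobSq A
        - 2 * μ * (1 - μ)
            * (v ⬝ᵥ (xmu - (frobSq A)⁻¹ • (Aᵀ *ᵥ (A *ᵥ xmu)))) := by
        rw [hvc]
        have hAv : 0 ≤ vnormSq (A *ᵥ v) / frobSq A :=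
          div_nonneg (vnormSq_nonneg _) hFpos.le
        nlinarith [vnormSq_nonneg xmu, sq_nonneg μ, sq_nonneg (1 - μ)]

lemma var_step_mean [NeZero n] {A : Matrix (Fin n) (Fin d) ℝ} (hrows : ∀ i, A i ≠ 0)
    (b : Fin n → ℝ) {μ lam : ℝ} (hμ0 : 0 < μ)
    (hlam : lam = (1 - μ) / μ * frobSq A)
    {xmu : Fin d → ℝ} (hxmu : Aᵀ *ᵥ (b - A *ᵥ xmu) = lam • xmu) (v : Fin d → ℝ) :
    ∑ i, rowProb A i • (μ • projStep A i v
        + (μ * ((b i - A i ⬝ᵥ xmu) / vnormSq (A i))) • A i - (1 - μ) • xmu)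
      = μ • (v - (frobSq A)⁻¹ • (Aᵀ *ᵥ (A *ᵥ v))) := by
  have hFpos := frobSq_pos hrows
  have hF := hFpos.ne'
  funext j
  have hABj : (Aᵀ *ᵥ (A *ᵥ v)) j = ∑ i, (A i ⬝ᵥ v) * A i j := by
    rw [transpose_mulVec_apply]; rfl
  have hArj : (∑ i, (b i - A i ⬝ᵥ xmu) * A i j) = lam * xmu j := by
    have h := congrFun hxmu j
    rw [transpose_mulVec_apply] at h
    simp only [Pi.sub_apply, Pi.smul_apply, smul_eq_mul] at h
    exact h
  have key : ∀ i : Fin n, (rowProb A i • (μ • projStep A i v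
        + (μ * ((b i - A i ⬝ᵥ xmu) / vnormSq (A i))) • A i - (1 - μ) • xmu)) j
      = μ * (rowProb A i * v j) - μ * ((A i ⬝ᵥ v) * A i j) / frobSq A
        + μ * ((b i - A i ⬝ᵥ xmu) * A i j) / frobSq A
        - (1 - μ) * (rowProb A i * xmu j) := by
    intro i
    have hi := (vnormSq_pos (hrows i)).ne'
    simp only [Pi.smul_apply, Pi.add_apply, Pi.sub_apply, projStep, smul_eq_mul]
    unfold rowProb
    field_simp
  rw [Finset.sum_apply]
  rw [Finset.sum_congr rfl fun i _ => key i]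
  rw [Finset.sum_sub_distrib, Finset.sum_add_distrib, Finset.sum_sub_distrib]
  have p1 : ∑ i : Fin n, μ * (rowProb A i * v j) = μ * v j := by
    rw [← Finset.mul_sum, ← Finset.sum_mul, sum_rowProb hF]; ring
  have p2 : ∑ i : Fin n, μ * ((A i ⬝ᵥ v) * A i j) / frobSq A
      = μ * (Aᵀ *ᵥ (A *ᵥ v)) j / frobSq A := by
    rw [← Finset.sum_div, ← Finset.mul_sum, hABj]
  have p3 : ∑ i : Fin n, μ * ((b i - A i ⬝ᵥ xmu) * A i j) / frobSq A
      = (1 - μ) * xmu j := by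
    rw [← Finset.sum_div, ← Finset.mul_sum, hArj, hlam]
    field_simp
  have p4 : ∑ i : Fin n, (1 - μ) * (rowProb A i * xmu j) = (1 - μ) * xmu j := by
    rw [← Finset.mul_sum, ← Finset.sum_mul, sum_rowProb hF]; ring
  rw [p1, p2, p3, p4]
  simp only [Pi.smul_apply, Pi.sub_apply, smul_eq_mul]
  ring

lemma var_bound [NeZero n] {A : Matrix (Fin n) (Fin d) ℝ} (hrows : ∀ i, A i ≠ 0)
    (b : Fin n → ℝ) {μ lam : ℝ} (hμ0 : 0 < μ) (hμ1 : μ < 1)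
    (hlam : lam = (1 - μ) / μ * frobSq A)
    {xmu : Fin d → ℝ} (hxmu : Aᵀ *ᵥ (b - A *ᵥ xmu) = lam • xmu) :
    ∀ t : ℕ,
    (∑ ω : Fin t → Fin n, pathWeight A ω • varSeq A b μ xmu (extendPath ω) t = 0) ∧
    (∑ ω : Fin t → Fin n, pathWeight A ω * vnormSq (varSeq A b μ xmu (extendPath ω) t)
      ≤ μ ^ 2 * vnormSq (b - A *ᵥ xmu) / ((1 - μ ^ 2) * frobSq A))
  | 0 => by
    have hFpos := frobSq_pos hrows
    have h1 : 0 < 1 - μ ^ 2 := by nlinarith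
    constructor
    · simp [varSeq]
    · have : ∀ ω : Fin 0 → Fin n,
          pathWeight A ω * vnormSq (varSeq A b μ xmu (extendPath ω) 0) = 0 := by
        intro ω
        simp [varSeq, vnormSq]
      rw [Finset.sum_congr rfl fun ω _ => this ω, Finset.sum_const, smul_zero]
      have h2 := vnormSq_nonneg (b - A *ᵥ xmu)
      positivity
  | t + 1 => by
    obtain ⟨ih1, ih2⟩ := var_bound hrows b hμ0 hμ1 hlam hxmu t
    have hFpos := frobSq_pos hrows
    have hF := hFpos.ne'
    have hμsq : 0 < 1 - μ ^ 2 := by nlinarith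
    have hcong : ∀ (ω : Fin t → Fin n) (i : Fin n),
        varSeq A b μ xmu (extendPath (Fin.snoc ω i)) (t + 1)
          = μ • projStep A i (varSeq A b μ xmu (extendPath ω) t)
            + (μ * ((b i - A i ⬝ᵥ xmu) / vnormSq (A i))) • A i - (1 - μ) • xmu := by
      intro ω i
      simp only [varSeq]
      rw [extendPath_snoc_last,
        varSeq_congr A b μ xmu t (fun s hs => extendPath_snoc_lt ω i hs)]
    constructor
    · rw [sum_snoc']
      set K : (Fin d → ℝ) →ₗ[ℝ] (Fin d → ℝ) :=
        LinearMap.id - (frobSq A)⁻¹ • ((Aᵀ).mulVecLin.comp A.mulVecLin) with hKdef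
      have hK : ∀ x : Fin d → ℝ, K x = x - (frobSq A)⁻¹ • (Aᵀ *ᵥ (A *ᵥ x)) := by
        intro x
        simp only [hKdef, LinearMap.sub_apply, LinearMap.id_apply, LinearMap.smul_apply,
          LinearMap.comp_apply, Matrix.mulVecLin_apply]
      have inner : ∀ ω : Fin t → Fin n,
          ∑ i : Fin n, pathWeight A (Fin.snoc ω i)
              • varSeq A b μ xmu (extendPath (Fin.snoc ω i)) (t + 1)
            = μ • K (pathWeight A ω • varSeq A b μ xmu (extendPath ω) t) := by
        intro ω
        have hrhs : μ • K (pathWeight A ω • varSeq A b μ xmu (extendPath ω) t)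
            = pathWeight A ω • (μ • (varSeq A b μ xmu (extendPath ω) t
                - (frobSq A)⁻¹ • (Aᵀ *ᵥ (A *ᵥ varSeq A b μ xmu (extendPath ω) t)))) := by
          rw [_root_.map_smul, hK, smul_comm]
        rw [hrhs, ← var_step_mean hrows b hμ0 hlam hxmu, Finset.smul_sum]
        exact Finset.sum_congr rfl fun i _ => by
          rw [hcong ω i, pathWeight_snoc, mul_smul]
      rw [Finset.sum_congr rfl fun ω _ => inner ω, ← Finset.smul_sum, ← map_sum, ih1,
        map_zero, smul_zero]
    · rw [sum_snoc']
      have inner : ∀ ω : Fin t → Fin n,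
          ∑ i : Fin n, pathWeight A (Fin.snoc ω i)
              * vnormSq (varSeq A b μ xmu (extendPath (Fin.snoc ω i)) (t + 1))
            ≤ pathWeight A ω * (μ ^ 2 * vnormSq (varSeq A b μ xmu (extendPath ω) t)
                + μ ^ 2 * vnormSq (b - A *ᵥ xmu) / frobSq A
                - 2 * μ * (1 - μ) * (varSeq A b μ xmu (extendPath ω) t
                    ⬝ᵥ (xmu - (frobSq A)⁻¹ • (Aᵀ *ᵥ (A *ᵥ xmu))))) := by
        intro ω
        have hexp : ∑ i : Fin n, pathWeight A (Fin.snoc ω i)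
              * vnormSq (varSeq A b μ xmu (extendPath (Fin.snoc ω i)) (t + 1))
            = pathWeight A ω * ∑ i : Fin n, rowProb A i
                * vnormSq (μ • projStep A i (varSeq A b μ xmu (extendPath ω) t)
                  + (μ * ((b i - A i ⬝ᵥ xmu) / vnormSq (A i))) • A i - (1 - μ) • xmu) := by
          rw [Finset.mul_sum]
          exact Finset.sum_congr rfl fun i _ => by
            rw [hcong ω i, pathWeight_snoc]; ring
        rw [hexp]
        exact mul_le_mul_of_nonneg_left
          (var_step_le hrows b hμ0 hμ1 hlam hxmu _) (pathWeight_nonneg A ω)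
      have hzero : ∑ ω : Fin t → Fin n, pathWeight A ω
          * (varSeq A b μ xmu (extendPath ω) t
              ⬝ᵥ (xmu - (frobSq A)⁻¹ • (Aᵀ *ᵥ (A *ᵥ xmu)))) = 0 := by
        have hds : (∑ ω : Fin t → Fin n,
              pathWeight A ω • varSeq A b μ xmu (extendPath ω) t)
              ⬝ᵥ (xmu - (frobSq A)⁻¹ • (Aᵀ *ᵥ (A *ᵥ xmu)))
            = ∑ ω : Fin t → Fin n, pathWeight A ω
                * (varSeq A b μ xmu (extendPath ω) t
                    ⬝ᵥ (xmu - (frobSq A)⁻¹ • (Aᵀ *ᵥ (A *ᵥ xmu)))) := by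
          simp only [dotProduct, Finset.sum_apply, Finset.sum_mul, Pi.smul_apply,
            smul_eq_mul, Finset.mul_sum]
          rw [Finset.sum_comm]
          exact Finset.sum_congr rfl fun ω _ => Finset.sum_congr rfl fun j _ => by ring
        rw [← hds, ih1, zero_dotProduct]
      calc ∑ ω : Fin t → Fin n, ∑ i : Fin n, pathWeight A (Fin.snoc ω i)
              * vnormSq (varSeq A b μ xmu (extendPath (Fin.snoc ω i)) (t + 1))
          ≤ ∑ ω : Fin t → Fin n, pathWeight A ω
              * (μ ^ 2 * vnormSq (varSeq A b μ xmu (extendPath ω) t)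
                + μ ^ 2 * vnormSq (b - A *ᵥ xmu) / frobSq A
                - 2 * μ * (1 - μ) * (varSeq A b μ xmu (extendPath ω) t
                    ⬝ᵥ (xmu - (frobSq A)⁻¹ • (Aᵀ *ᵥ (A *ᵥ xmu))))) :=
            Finset.sum_le_sum fun ω _ => inner ω
        _ = μ ^ 2 * (∑ ω : Fin t → Fin n, pathWeight A ω
                * vnormSq (varSeq A b μ xmu (extendPath ω) t))
            + (μ ^ 2 * vnormSq (b - A *ᵥ xmu) / frobSq A)
                * (∑ ω : Fin t → Fin n, pathWeight A ω)
            - 2 * μ * (1 - μ) * (∑ ω : Fin t → Fin n, pathWeight A ω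
                * (varSeq A b μ xmu (extendPath ω) t
                    ⬝ᵥ (xmu - (frobSq A)⁻¹ • (Aᵀ *ᵥ (A *ᵥ xmu))))) := by
            rw [Finset.mul_sum, Finset.mul_sum, Finset.mul_sum,
              ← Finset.sum_add_distrib, ← Finset.sum_sub_distrib]
            exact Finset.sum_congr rfl fun ω _ => by ring
        _ ≤ μ ^ 2 * (μ ^ 2 * vnormSq (b - A *ᵥ xmu) / ((1 - μ ^ 2) * frobSq A))
            + (μ ^ 2 * vnormSq (b - A *ᵥ xmu) / frobSq A) * 1 - 0 := by
            rw [hzero, sum_pathWeight hF t]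
            have := mul_le_mul_of_nonneg_left ih2 (sq_nonneg μ)
            linarith
        _ = μ ^ 2 * vnormSq (b - A *ᵥ xmu) / ((1 - μ ^ 2) * frobSq A) := by
            field_simp
            ring



/-- RK-RR converges to the ridge solution up to a finite horizon:
E‖x_t - x_μ‖² ≤ 2[μ²(1 - κ_dem⁻²)]^t ‖x_0 - x_μ‖² + (2μ/((1+μ)λ)) ‖b - Ax_μ‖²,
assuming x_0 ∈ range(Aᵀ). -/
theorem rkrr_horizon_bound {n d : ℕ} [NeZero n]
    (A : Matrix (Fin n) (Fin d) ℝ) (b : Fin n → ℝ) (hrows : ∀ i, A i ≠ 0)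
    (Ap : Matrix (Fin d) (Fin n) ℝ) (hAp : IsMoorePenrose A Ap)
    (μ : ℝ) (hμ0 : 0 < μ) (hμ1 : μ < 1)
    (lam : ℝ) (hlam : lam = (1 - μ) / μ * frobSq A)
    (xmu : Fin d → ℝ) (hxmu : Aᵀ *ᵥ (b - A *ᵥ xmu) = lam • xmu)
    (x0 : Fin d → ℝ) (h0 : inRowSpace A x0) (t : ℕ) :
    ∑ ω : Fin t → Fin n, pathWeight A ω * vnormSq (rrSeq A b μ x0 (extendPath ω) t - xmu)
      ≤ 2 * (μ ^ 2 * (1 - (kdem A Ap ^ 2)⁻¹)) ^ t * vnormSq (x0 - xmu)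
        + 2 * μ / ((1 + μ) * lam) * vnormSq (b - A *ᵥ xmu) := by
  have hFpos := frobSq_pos hrows
  have hF := hFpos.ne'
  have hμ1' : (0:ℝ) < 1 - μ := by linarith
  have hlam0 : 0 < lam := by rw [hlam]; positivity
  have hxmu_row : inRowSpace A xmu := by
    refine ⟨lam⁻¹ • (b - A *ᵥ xmu), ?_⟩
    rw [Matrix.mulVec_smul, hxmu, smul_smul, inv_mul_cancel₀ hlam0.ne', one_smul]
  have h0' : inRowSpace A (x0 - xmu) := inRowSpace_sub A h0 hxmu_row
  have hbias := bias_bound hrows hAp b μ h0' t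
  obtain ⟨hv1, hv2⟩ := var_bound hrows b hμ0 hμ1 hlam hxmu t
  have hdec : ∀ ω : Fin t → Fin n,
      vnormSq (rrSeq A b μ x0 (extendPath ω) t - xmu)
        ≤ 2 * vnormSq (biasSeq A μ (x0 - xmu) (extendPath ω) t)
          + 2 * vnormSq (varSeq A b μ xmu (extendPath ω) t) := by
    intro ω
    rw [rr_decomp A b μ xmu x0 (extendPath ω) t]
    exact vnormSq_add_le _ _
  have hBeq : 2 * (μ ^ 2 * vnormSq (b - A *ᵥ xmu) / ((1 - μ ^ 2) * frobSq A))
      = 2 * μ / ((1 + μ) * lam) * vnormSq (b - A *ᵥ xmu) := by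
    have h2 : (0:ℝ) < 1 + μ := by linarith
    have h4 : (1:ℝ) - μ ^ 2 ≠ 0 := by nlinarith
    rw [hlam]
    field_simp
    ring
  calc ∑ ω : Fin t → Fin n, pathWeight A ω
        * vnormSq (rrSeq A b μ x0 (extendPath ω) t - xmu)
      ≤ ∑ ω : Fin t → Fin n, pathWeight A ω
          * (2 * vnormSq (biasSeq A μ (x0 - xmu) (extendPath ω) t)
            + 2 * vnormSq (varSeq A b μ xmu (extendPath ω) t)) :=
        Finset.sum_le_sum fun ω _ =>
          mul_le_mul_of_nonneg_left (hdec ω) (pathWeight_nonneg A ω)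
    _ = 2 * (∑ ω : Fin t → Fin n, pathWeight A ω
          * vnormSq (biasSeq A μ (x0 - xmu) (extendPath ω) t))
        + 2 * (∑ ω : Fin t → Fin n, pathWeight A ω
          * vnormSq (varSeq A b μ xmu (extendPath ω) t)) := by
        rw [Finset.mul_sum, Finset.mul_sum, ← Finset.sum_add_distrib]
        exact Finset.sum_congr rfl fun ω _ => by ring
    _ ≤ 2 * ((μ ^ 2 * (1 - (kdem A Ap ^ 2)⁻¹)) ^ t * vnormSq (x0 - xmu))
        + 2 * (μ ^ 2 * vnormSq (b - A *ᵥ xmu) / ((1 - μ ^ 2) * frobSq A)) := by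
        have a1 := mul_le_mul_of_nonneg_left hbias (by norm_num : (0:ℝ) ≤ 2)
        have a2 := mul_le_mul_of_nonneg_left hv2 (by norm_num : (0:ℝ) ≤ 2)
        linarith
    _ = 2 * (μ ^ 2 * (1 - (kdem A Ap ^ 2)⁻¹)) ^ t * vnormSq (x0 - xmu)
        + 2 * μ / ((1 + μ) * lam) * vnormSq (b - A *ᵥ xmu) := by
        rw [hBeq]; ring
end
end

section
/- For preconditioned TARK applied to min_y ||b - Qy||^2 where Q ∈ R^{n×r} has orthonormal columns, if the initialization y_0 satisfies E||y_0 - y_star||^2 ≤ r ||b - Q y_star||^2, then the TARK output ȳ_t satisfies E||b - Q ȳ_t||^2 ≤ [1 + (1 - 1/r)^{t_b} r + (2r-1)/(t - t_b)] ||b - Q y_star||^2. -/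
open Matrix Finset
noncomputable section

namespace TarkAux
set_option linter.unusedSectionVars false
set_option linter.unusedVariables false

lemma vnormSq_eq_dot {k : ℕ} (x : Fin k → ℝ) : vnormSq x = x ⬝ᵥ x := by
  simp [vnormSq, dotProduct, sq]

lemma vnormSq_nonneg {k : ℕ} (x : Fin k → ℝ) : 0 ≤ vnormSq x :=
  Finset.sum_nonneg fun i _ => sq_nonneg _

lemma vnormSq_eq_zero {k : ℕ} {x : Fin k → ℝ} (h : vnormSq x = 0) : x = 0 := by
  funext j
  have := (Finset.sum_eq_zero_iff_of_nonneg (fun i _ => sq_nonneg (x i))).1 h j (mem_univ _)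
  exact pow_eq_zero_iff (n := 2) (by norm_num) |>.1 this

lemma vnormSq_smul {k : ℕ} (c : ℝ) (x : Fin k → ℝ) : vnormSq (c • x) = c ^ 2 * vnormSq x := by
  simp [vnormSq, mul_pow, Finset.mul_sum, mul_comm]

lemma vnormSq_add {k : ℕ} (x y : Fin k → ℝ) :
    vnormSq (x + y) = vnormSq x + 2 * (x ⬝ᵥ y) + vnormSq y := by
  simp only [vnormSq_eq_dot, dotProduct_add, add_dotProduct]
  rw [dotProduct_comm y x]; ring

lemma vnormSq_neg_sub {k : ℕ} (x y : Fin k → ℝ) : vnormSq (x - y) = vnormSq (y - x) := by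
  simp [vnormSq]; congr 1; funext i; ring

variable {n r : ℕ} [NeZero n]

lemma frobSq_Q (Q : Matrix (Fin n) (Fin r) ℝ) (hQ : Qᵀ * Q = 1) : frobSq Q = r := by
  have h : ∀ j : Fin r, (Qᵀ * Q) j j = 1 := fun j => by rw [hQ]; simp [Matrix.one_apply]
  have : frobSq Q = ∑ j : Fin r, (Qᵀ * Q) j j := by
    simp only [frobSq, vnormSq, Matrix.mul_apply, Matrix.transpose_apply, sq]
    rw [Finset.sum_comm]
  rw [this]; simp [h]

lemma sum_rowProb (hr : 0 < r) (Q : Matrix (Fin n) (Fin r) ℝ) (hQ : Qᵀ * Q = 1) :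
    ∑ i, rowProb Q i = 1 := by
  simp only [rowProb, div_eq_mul_inv, ← Finset.sum_mul]
  rw [← frobSq, frobSq_Q Q hQ]
  have : (r : ℝ) ≠ 0 := Nat.cast_ne_zero.2 hr.ne'
  field_simp

lemma rowProb_nonneg (Q : Matrix (Fin n) (Fin r) ℝ) (i : Fin n) : 0 ≤ rowProb Q i :=
  div_nonneg (vnormSq_nonneg _) (Finset.sum_nonneg fun _ _ => vnormSq_nonneg _)

lemma pathWeight_nonneg (Q : Matrix (Fin n) (Fin r) ℝ) {T : ℕ} (ω : Fin T → Fin n) :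
    0 ≤ pathWeight Q ω :=
  Finset.prod_nonneg fun _ _ => rowProb_nonneg Q _

lemma sum_pathWeight (hr : 0 < r) (Q : Matrix (Fin n) (Fin r) ℝ) (hQ : Qᵀ * Q = 1) (T : ℕ) :
    ∑ ω : Fin T → Fin n, pathWeight Q ω = 1 := by
  have h1 : ∑ ω ∈ Fintype.piFinset (fun _ : Fin T => (univ : Finset (Fin n))),
      ∏ t, rowProb Q (ω t) = ∏ _t : Fin T, ∑ i, rowProb Q i :=
    (Finset.prod_univ_sum _ _).symm
  rw [Fintype.piFinset_univ] at h1
  simp only [pathWeight]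
  rw [h1, sum_rowProb hr Q hQ, Finset.prod_const_one]


section Geometry
variable (Q : Matrix (Fin n) (Fin r) ℝ) (b : Fin n → ℝ)


/-- orthonormal columns: dot of images -/
lemma dot_Q (hQ : Qᵀ * Q = 1) (u v : Fin r → ℝ) : (Q *ᵥ u) ⬝ᵥ (Q *ᵥ v) = u ⬝ᵥ v := by
  rw [dotProduct_mulVec, ← Matrix.mulVec_transpose, Matrix.mulVec_mulVec, hQ, Matrix.one_mulVec]

lemma Qt_rho (hQ : Qᵀ * Q = 1) : Qᵀ *ᵥ (b - Q *ᵥ (Qᵀ *ᵥ b)) = 0 := by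
  rw [Matrix.mulVec_sub, Matrix.mulVec_mulVec, hQ, Matrix.one_mulVec, sub_self]

lemma rho_dot_Qv (hQ : Qᵀ * Q = 1) (v : Fin r → ℝ) :
    (b - Q *ᵥ (Qᵀ *ᵥ b)) ⬝ᵥ (Q *ᵥ v) = 0 := by
  rw [dotProduct_mulVec, ← Matrix.mulVec_transpose, Qt_rho Q b hQ, zero_dotProduct]

lemma pythagoras (hQ : Qᵀ * Q = 1) (y : Fin r → ℝ) :
    vnormSq (b - Q *ᵥ y) = vnormSq (b - Q *ᵥ (Qᵀ *ᵥ b)) + vnormSq (y - Qᵀ *ᵥ b) := by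
  have hdecomp : b - Q *ᵥ y = (b - Q *ᵥ (Qᵀ *ᵥ b)) + Q *ᵥ ((Qᵀ *ᵥ b) - y) := by
    rw [Matrix.mulVec_sub]; abel
  rw [hdecomp, vnormSq_add, rho_dot_Qv Q b hQ, vnormSq_eq_dot (Q *ᵥ _), dot_Q Q hQ,
    ← vnormSq_eq_dot,
    show vnormSq ((Qᵀ *ᵥ b) - y) = vnormSq (y - Qᵀ *ᵥ b) from vnormSq_neg_sub _ _]
  ring

end Geometry

section StepLemmas
variable (Q : Matrix (Fin n) (Fin r) ℝ) (b : Fin n → ℝ)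

lemma cross_step_row (hr : 0 < r) (hQ : Qᵀ * Q = 1) (a x : Fin r → ℝ) :
    ∑ i, rowProb Q i * (a ⬝ᵥ (rkStep Q b i x - Qᵀ *ᵥ b)) =
      (1 - 1 / (r : ℝ)) * (a ⬝ᵥ (x - Qᵀ *ᵥ b)) := by
  have hrr : (r : ℝ) ≠ 0 := Nat.cast_ne_zero.2 hr.ne'
  have hfr : frobSq Q = r := frobSq_Q Q hQ
  have step1 : ∀ i, rowProb Q i * (a ⬝ᵥ (rkStep Q b i x - Qᵀ *ᵥ b)) =
      rowProb Q i * (a ⬝ᵥ (x - Qᵀ *ᵥ b))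
        + (1 / (r : ℝ)) * ((b i - Q i ⬝ᵥ x) * (a ⬝ᵥ Q i)) := by
    intro i
    have hsplit : rkStep Q b i x - Qᵀ *ᵥ b
        = (x - Qᵀ *ᵥ b) + ((b i - Q i ⬝ᵥ x) / vnormSq (Q i)) • Q i := by
      rw [rkStep]; abel
    rw [hsplit, dotProduct_add, dotProduct_smul, smul_eq_mul]
    rcases eq_or_ne (vnormSq (Q i)) 0 with h0 | h0
    · have hz : Q i = 0 := vnormSq_eq_zero h0
      simp [hz, rowProb, h0]
    · rw [rowProb, hfr]
      field_simp
  rw [Finset.sum_congr rfl fun i _ => step1 i, Finset.sum_add_distrib, ← Finset.sum_mul,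
    sum_rowProb hr Q hQ, ← Finset.mul_sum]
  have hsum : ∑ i, (b i - Q i ⬝ᵥ x) * (a ⬝ᵥ Q i) = (Qᵀ *ᵥ b - x) ⬝ᵥ a := by
    have h1 : ∑ i, (b i - Q i ⬝ᵥ x) * (a ⬝ᵥ Q i) = (b - Q *ᵥ x) ⬝ᵥ (Q *ᵥ a) := by
      rw [show (b - Q *ᵥ x) ⬝ᵥ (Q *ᵥ a) = ∑ i, (b - Q *ᵥ x) i * (Q *ᵥ a) i from rfl]
      refine Finset.sum_congr rfl fun i _ => ?_
      rw [show (Q *ᵥ a) i = Q i ⬝ᵥ a from rfl, Pi.sub_apply,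
        show (Q *ᵥ x) i = Q i ⬝ᵥ x from rfl, dotProduct_comm a]
    rw [h1, dotProduct_mulVec, ← Matrix.mulVec_transpose, Matrix.mulVec_sub,
      Matrix.mulVec_mulVec, hQ, Matrix.one_mulVec]
  rw [hsum]
  have h2 : (Qᵀ *ᵥ b - x) ⬝ᵥ a = -(a ⬝ᵥ (x - Qᵀ *ᵥ b)) := by
    rw [dotProduct_comm, show (Qᵀ *ᵥ b - x) = -(x - Qᵀ *ᵥ b) by abel, dotProduct_neg]
  rw [h2]
  ring

lemma sq_step_row (hr : 0 < r) (hQ : Qᵀ * Q = 1) (x : Fin r → ℝ) :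
    ∑ i, rowProb Q i * vnormSq (rkStep Q b i x - Qᵀ *ᵥ b) ≤
      (1 - 1 / (r : ℝ)) * vnormSq (x - Qᵀ *ᵥ b)
        + vnormSq (b - Q *ᵥ (Qᵀ *ᵥ b)) / r := by
  have hrr : (0 : ℝ) < r := Nat.cast_pos.2 hr
  have hfr : frobSq Q = r := frobSq_Q Q hQ
  set e : Fin r → ℝ := x - Qᵀ *ᵥ b with he
  have hbi : ∀ i, b i - Q i ⬝ᵥ x = (b - Q *ᵥ (Qᵀ *ᵥ b)) i - (Q *ᵥ e) i := by
    intro i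
    rw [Pi.sub_apply, show (Q *ᵥ (Qᵀ *ᵥ b)) i = Q i ⬝ᵥ (Qᵀ *ᵥ b) from rfl,
      show (Q *ᵥ e) i = Q i ⬝ᵥ e from rfl, he, dotProduct_sub]
    ring
  have hper : ∀ i, rowProb Q i * vnormSq (rkStep Q b i x - Qᵀ *ᵥ b) ≤
      rowProb Q i * vnormSq e
        + (((b - Q *ᵥ (Qᵀ *ᵥ b)) i) ^ 2 - ((Q *ᵥ e) i) ^ 2) / r := by
    intro i
    have hsplit : rkStep Q b i x - Qᵀ *ᵥ b
        = e + ((b i - Q i ⬝ᵥ x) / vnormSq (Q i)) • Q i := by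
      rw [rkStep, he]; abel
    rcases eq_or_ne (vnormSq (Q i)) 0 with h0 | h0
    · have hz : Q i = 0 := vnormSq_eq_zero h0
      have hQe : (Q *ᵥ e) i = 0 := by
        rw [show (Q *ᵥ e) i = Q i ⬝ᵥ e from rfl, hz, zero_dotProduct]
      have : rkStep Q b i x - Qᵀ *ᵥ b = e := by
        rw [hsplit, hz, smul_zero, add_zero]
      rw [this, hQe]
      have h1 : (0:ℝ) ≤ ((b - Q *ᵥ (Qᵀ *ᵥ b)) i) ^ 2 / r := by positivity
      have h02 : ((0:ℝ)) ^ 2 = 0 := by norm_num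
      rw [h02, sub_zero]
      linarith
    · have hdot : Q i ⬝ᵥ e = (Q *ᵥ e) i := rfl
      set u : ℝ := (Q *ᵥ e) i with hu
      set ρ : ℝ := (b - Q *ᵥ (Qᵀ *ᵥ b)) i with hρ
      have hbi' : b i - Q i ⬝ᵥ x = ρ - u := hbi i
      rw [hsplit, vnormSq_add, vnormSq_smul, hbi', rowProb, hfr,
        dotProduct_smul, smul_eq_mul, dotProduct_comm e (Q i), hdot]
      apply le_of_eq
      field_simp
      ring
  calc ∑ i, rowProb Q i * vnormSq (rkStep Q b i x - Qᵀ *ᵥ b)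
      ≤ ∑ i, (rowProb Q i * vnormSq e
          + (((b - Q *ᵥ (Qᵀ *ᵥ b)) i) ^ 2 - ((Q *ᵥ e) i) ^ 2) / r) :=
        Finset.sum_le_sum fun i _ => hper i
    _ = (1 - 1 / (r : ℝ)) * vnormSq e + vnormSq (b - Q *ᵥ (Qᵀ *ᵥ b)) / r := by
        rw [Finset.sum_add_distrib, ← Finset.sum_mul, sum_rowProb hr Q hQ]
        have hsq : ∑ i, (((b - Q *ᵥ (Qᵀ *ᵥ b)) i) ^ 2 - ((Q *ᵥ e) i) ^ 2) / r
            = (vnormSq (b - Q *ᵥ (Qᵀ *ᵥ b)) - vnormSq (Q *ᵥ e)) / r := by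
          rw [← Finset.sum_div, Finset.sum_sub_distrib]
          rfl
        rw [hsq]
        have hQe : vnormSq (Q *ᵥ e) = vnormSq e := by
          rw [vnormSq_eq_dot, dot_Q Q hQ, ← vnormSq_eq_dot]
        rw [hQe]
        field_simp
        ring

end StepLemmas

section Paths

lemma rkSeq_congr {d : ℕ} (A : Matrix (Fin n) (Fin d) ℝ) (b : Fin n → ℝ) (x0 : Fin d → ℝ) :
    ∀ (m : ℕ) (ω ω' : ℕ → Fin n), (∀ j, j < m → ω j = ω' j) →
      rkSeq A b x0 ω m = rkSeq A b x0 ω' m := by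
  intro m
  induction m with
  | zero => intro ω ω' _; rfl
  | succ m ih =>
      intro ω ω' h
      show rkStep A b (ω m) _ = rkStep A b (ω' m) _
      rw [h m (Nat.lt_succ_self m), ih ω ω' fun j hj => h j (hj.trans (Nat.lt_succ_self m))]

lemma extendPath_update {T : ℕ} (ω : Fin T → Fin n) (k : Fin T) (i : Fin n) (j : ℕ)
    (hj : j ≠ (k : ℕ)) : extendPath (Function.update ω k i) j = extendPath ω j := by
  unfold extendPath
  by_cases h : j < T
  · rw [dif_pos h, dif_pos h, Function.update_of_ne]
    exact fun hc => hj (by rw [← hc])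
  · rw [dif_neg h, dif_neg h]

lemma extendPath_lt {T : ℕ} (ω : Fin T → Fin n) (j : ℕ) (hj : j < T) :
    extendPath ω j = ω ⟨j, hj⟩ := dif_pos hj

/-- Tower rule: conditioning on coordinate k of the path. -/
lemma tower {T : ℕ} (hr : 0 < r) (Q : Matrix (Fin n) (Fin r) ℝ) (hQ : Qᵀ * Q = 1)
    (k : Fin T) (G : (Fin T → Fin n) → Fin n → ℝ)
    (hG : ∀ ω i, G (Function.update ω k i) = G ω) :
    ∑ ω : Fin T → Fin n, pathWeight Q ω * G ω (ω k)
      = ∑ ω : Fin T → Fin n, pathWeight Q ω * ∑ i, rowProb Q i * G ω i := by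
  classical
  set E := Equiv.piSplitAt k (fun _ : Fin T => Fin n) with hE
  have hsymmk : ∀ (p : Fin n × ({j : Fin T // j ≠ k} → Fin n)), E.symm p k = p.1 := by
    intro p; simp [hE]
  have hupdate : ∀ (i i' : Fin n) (f : {j : Fin T // j ≠ k} → Fin n),
      E.symm (i, f) = Function.update (E.symm (i', f)) k i := by
    intro i i' f
    funext j
    by_cases h : j = k
    · subst h; simp [hE, Function.update_self]
    · simp [hE, Function.update_of_ne h, Equiv.piSplitAt_symm_apply, dif_neg h]
  have hweight : ∀ (i : Fin n) (f : {j : Fin T // j ≠ k} → Fin n),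
      pathWeight Q (E.symm (i, f)) = rowProb Q i * ∏ j : {j : Fin T // j ≠ k}, rowProb Q (f j) := by
    intro i f
    rw [pathWeight, ← Finset.mul_prod_erase univ _ (mem_univ k), hsymmk (i, f)]
    congr 1
    rw [Finset.prod_subtype (p := fun j => j ≠ k) (univ.erase k) (fun j => by simp)
      fun j => rowProb Q (E.symm (i, f) j)]
    refine Finset.prod_congr rfl fun j _ => ?_
    congr 1
    simp [hE, Equiv.piSplitAt_symm_apply, dif_neg j.2]
  have hGfix : ∀ (i i' : Fin n) (f : {j : Fin T // j ≠ k} → Fin n),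
      G (E.symm (i, f)) = G (E.symm (i', f)) := by
    intro i i' f
    rw [hupdate i i' f, hG]
  -- reindex both sides
  rw [← Equiv.sum_comp E.symm (fun ω => pathWeight Q ω * G ω (ω k)),
    ← Equiv.sum_comp E.symm (fun ω => pathWeight Q ω * ∑ i, rowProb Q i * G ω i),
    Fintype.sum_prod_type, Fintype.sum_prod_type]
  rw [Finset.sum_comm]
  conv_rhs => rw [Finset.sum_comm]
  refine Finset.sum_congr rfl fun f _ => ?_
  have hbase : ∀ i : Fin n, G (E.symm (i, f)) = G (E.symm (0, f)) := fun i => hGfix i 0 f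
  calc ∑ i : Fin n, pathWeight Q (E.symm (i, f)) * G (E.symm (i, f)) (E.symm (i, f) k)
      = ∑ i : Fin n, (∏ j : {j : Fin T // j ≠ k}, rowProb Q (f j)) * (rowProb Q i * G (E.symm (0, f)) i) := by
        refine Finset.sum_congr rfl fun i _ => ?_
        rw [hweight, hsymmk (i, f), hbase i]
        ring
    _ = (∏ j : {j : Fin T // j ≠ k}, rowProb Q (f j)) * ∑ i, rowProb Q i * G (E.symm (0, f)) i := by
        rw [← Finset.mul_sum]
    _ = ∑ i' : Fin n, pathWeight Q (E.symm (i', f)) * ∑ i, rowProb Q i * G (E.symm (i', f)) i := by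
        rw [show (∏ j : {j : Fin T // j ≠ k}, rowProb Q (f j))
              * ∑ i, rowProb Q i * G (E.symm (0, f)) i
            = ∑ i' : Fin n, rowProb Q i' * ((∏ j : {j : Fin T // j ≠ k}, rowProb Q (f j))
              * ∑ i, rowProb Q i * G (E.symm (0, f)) i) by
          rw [← Finset.sum_mul, sum_rowProb hr Q hQ, one_mul]]
        refine Finset.sum_congr rfl fun i' _ => ?_
        rw [hweight, hbase i']
        ring

end Paths

section Geom

lemma gamma_nonneg (hr : 0 < r) : (0:ℝ) ≤ 1 - 1/(r:ℝ) := by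
  have h1 : (1:ℝ) ≤ r := Nat.one_le_cast.2 hr
  have : 1/(r:ℝ) ≤ 1 := by
    rw [div_le_one (by linarith)]; exact h1
  linarith

lemma gamma_le_one (hr : 0 < r) : (1 - 1/(r:ℝ)) ≤ 1 := by
  have hrr : (0:ℝ) < r := Nat.cast_pos.2 hr
  have : 0 < 1/(r:ℝ) := by positivity
  linarith

lemma geom_le (hr : 0 < r) (K : ℕ) :
    ∑ k ∈ Finset.range K, (1 - 1/(r:ℝ))^k ≤ (r:ℝ) := by
  have hrr : (0:ℝ) < r := Nat.cast_pos.2 hr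
  have hne : (1 - 1/(r:ℝ)) ≠ 1 := by
    have : 0 < 1/(r:ℝ) := by positivity
    intro h; linarith [h]
  rw [geom_sum_eq hne]
  have hneg : (1 - 1/(r:ℝ)) - 1 < 0 := by
    have : 0 < 1/(r:ℝ) := by positivity
    linarith
  rw [div_le_iff_of_neg hneg]
  have hid : (r:ℝ) * ((1 - 1/(r:ℝ)) - 1) = -1 := by field_simp; ring
  have hpow : 0 ≤ (1 - 1/(r:ℝ))^K := pow_nonneg (gamma_nonneg hr) K
  rw [hid]; linarith

end Geom

section DotSums

lemma sum_dotProduct' {k : ℕ} {ι : Type*} (s : Finset ι) (f : ι → Fin k → ℝ) (g : Fin k → ℝ) :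
    (∑ i ∈ s, f i) ⬝ᵥ g = ∑ i ∈ s, f i ⬝ᵥ g := by
  simp only [dotProduct, Finset.sum_apply, Finset.sum_mul]
  exact Finset.sum_comm

lemma dotProduct_sum' {k : ℕ} {ι : Type*} (s : Finset ι) (g : Fin k → ℝ) (f : ι → Fin k → ℝ) :
    g ⬝ᵥ (∑ i ∈ s, f i) = ∑ i ∈ s, g ⬝ᵥ f i := by
  rw [dotProduct_comm, sum_dotProduct']
  exact Finset.sum_congr rfl fun i _ => dotProduct_comm _ _

end DotSums

section Core
variable (Q : Matrix (Fin n) (Fin r) ℝ) (b : Fin n → ℝ) (y0 : Fin r → ℝ) (t : ℕ)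

/-- error of the RK iterate at time s along path ω -/
def errV (s : ℕ) (ω : Fin t → Fin n) : Fin r → ℝ :=
  rkSeq Q b y0 (extendPath ω) s - Qᵀ *ᵥ b

/-- expected inner product of errors at times s, s' -/
def ECV (s s' : ℕ) : ℝ :=
  ∑ ω : Fin t → Fin n, pathWeight Q ω * (errV Q b y0 t s ω ⬝ᵥ errV Q b y0 t s' ω)

lemma errV_update (s : ℕ) (k : Fin t) (hsk : s ≤ (k : ℕ)) (ω : Fin t → Fin n) (i : Fin n) :
    errV Q b y0 t s (Function.update ω k i) = errV Q b y0 t s ω := by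
  unfold errV
  congr 1
  apply rkSeq_congr
  intro j hj
  exact extendPath_update ω k i j (by omega)

lemma rkSeq_update (s : ℕ) (k : Fin t) (hsk : s ≤ (k : ℕ)) (ω : Fin t → Fin n) (i : Fin n) :
    rkSeq Q b y0 (extendPath (Function.update ω k i)) s = rkSeq Q b y0 (extendPath ω) s := by
  apply rkSeq_congr
  intro j hj
  exact extendPath_update ω k i j (by omega)

lemma errV_succ {s : ℕ} (hs : s < t) (ω : Fin t → Fin n) :
    errV Q b y0 t (s + 1) ω
      = rkStep Q b (ω ⟨s, hs⟩) (rkSeq Q b y0 (extendPath ω) s) - Qᵀ *ᵥ b := by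
  unfold errV
  rw [show rkSeq Q b y0 (extendPath ω) (s + 1)
      = rkStep Q b (extendPath ω s) (rkSeq Q b y0 (extendPath ω) s) from rfl,
    extendPath_lt ω s hs]

lemma EC_symm (s s' : ℕ) : ECV Q b y0 t s s' = ECV Q b y0 t s' s := by
  unfold ECV
  exact Finset.sum_congr rfl fun ω _ => by rw [dotProduct_comm]

lemma EC_cross (hr : 0 < r) (hQ : Qᵀ * Q = 1) {s s' : ℕ} (hss' : s ≤ s') (hs' : s' < t) :
    ECV Q b y0 t s (s' + 1) = (1 - 1/(r:ℝ)) * ECV Q b y0 t s s' := by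
  have ht := tower hr Q hQ (T := t) ⟨s', hs'⟩
    (fun ω i => errV Q b y0 t s ω ⬝ᵥ (rkStep Q b i (rkSeq Q b y0 (extendPath ω) s') - Qᵀ *ᵥ b))
    (by
      intro ω i
      funext i'
      rw [errV_update Q b y0 t s ⟨s', hs'⟩ hss' ω i,
        rkSeq_update Q b y0 t s' ⟨s', hs'⟩ le_rfl ω i])
  calc ECV Q b y0 t s (s' + 1)
      = ∑ ω : Fin t → Fin n, pathWeight Q ω * (errV Q b y0 t s ω ⬝ᵥ
          (rkStep Q b (ω ⟨s', hs'⟩) (rkSeq Q b y0 (extendPath ω) s') - Qᵀ *ᵥ b)) := by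
        unfold ECV
        exact Finset.sum_congr rfl fun ω _ => by rw [errV_succ Q b y0 t hs' ω]
    _ = ∑ ω : Fin t → Fin n, pathWeight Q ω * ∑ i, rowProb Q i * (errV Q b y0 t s ω ⬝ᵥ
          (rkStep Q b i (rkSeq Q b y0 (extendPath ω) s') - Qᵀ *ᵥ b)) := ht
    _ = ∑ ω : Fin t → Fin n, pathWeight Q ω *
          ((1 - 1/(r:ℝ)) * (errV Q b y0 t s ω ⬝ᵥ errV Q b y0 t s' ω)) := by
        refine Finset.sum_congr rfl fun ω _ => ?_
        rw [cross_step_row Q b hr hQ (errV Q b y0 t s ω) (rkSeq Q b y0 (extendPath ω) s')]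
        rfl
    _ = (1 - 1/(r:ℝ)) * ECV Q b y0 t s s' := by
        unfold ECV
        rw [Finset.mul_sum]
        exact Finset.sum_congr rfl fun ω _ => by ring

lemma EC_sq (hr : 0 < r) (hQ : Qᵀ * Q = 1) {s : ℕ} (hs : s < t) :
    ECV Q b y0 t (s + 1) (s + 1) ≤ (1 - 1/(r:ℝ)) * ECV Q b y0 t s s
      + vnormSq (b - Q *ᵥ (Qᵀ *ᵥ b)) / r := by
  have ht := tower hr Q hQ (T := t) ⟨s, hs⟩
    (fun ω i => vnormSq (rkStep Q b i (rkSeq Q b y0 (extendPath ω) s) - Qᵀ *ᵥ b))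
    (by
      intro ω i
      funext i'
      rw [rkSeq_update Q b y0 t s ⟨s, hs⟩ le_rfl ω i])
  have hlhs : ECV Q b y0 t (s + 1) (s + 1)
      = ∑ ω : Fin t → Fin n, pathWeight Q ω *
          vnormSq (rkStep Q b (ω ⟨s, hs⟩) (rkSeq Q b y0 (extendPath ω) s) - Qᵀ *ᵥ b) := by
    unfold ECV
    refine Finset.sum_congr rfl fun ω _ => ?_
    rw [errV_succ Q b y0 t hs ω, ← vnormSq_eq_dot]
  rw [hlhs, ht]
  have hbound : ∀ ω : Fin t → Fin n, pathWeight Q ω *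
      ∑ i, rowProb Q i * vnormSq (rkStep Q b i (rkSeq Q b y0 (extendPath ω) s) - Qᵀ *ᵥ b)
      ≤ pathWeight Q ω * ((1 - 1/(r:ℝ)) * (errV Q b y0 t s ω ⬝ᵥ errV Q b y0 t s ω)
          + vnormSq (b - Q *ᵥ (Qᵀ *ᵥ b)) / r) := by
    intro ω
    apply mul_le_mul_of_nonneg_left _ (pathWeight_nonneg Q ω)
    have := sq_step_row Q b hr hQ (rkSeq Q b y0 (extendPath ω) s)
    rw [← vnormSq_eq_dot]
    exact this
  calc ∑ ω : Fin t → Fin n, pathWeight Q ω *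
        ∑ i, rowProb Q i * vnormSq (rkStep Q b i (rkSeq Q b y0 (extendPath ω) s) - Qᵀ *ᵥ b)
      ≤ ∑ ω : Fin t → Fin n, pathWeight Q ω *
          ((1 - 1/(r:ℝ)) * (errV Q b y0 t s ω ⬝ᵥ errV Q b y0 t s ω)
            + vnormSq (b - Q *ᵥ (Qᵀ *ᵥ b)) / r) :=
        Finset.sum_le_sum fun ω _ => hbound ω
    _ = (1 - 1/(r:ℝ)) * ECV Q b y0 t s s + vnormSq (b - Q *ᵥ (Qᵀ *ᵥ b)) / r := by
        unfold ECV
        rw [Finset.mul_sum]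
        have hsum : ∑ ω : Fin t → Fin n, pathWeight Q ω = 1 := sum_pathWeight hr Q hQ t
        calc ∑ ω : Fin t → Fin n, pathWeight Q ω *
              ((1 - 1/(r:ℝ)) * (errV Q b y0 t s ω ⬝ᵥ errV Q b y0 t s ω)
                + vnormSq (b - Q *ᵥ (Qᵀ *ᵥ b)) / r)
            = ∑ ω : Fin t → Fin n, ((1 - 1/(r:ℝ)) * (pathWeight Q ω * (errV Q b y0 t s ω ⬝ᵥ errV Q b y0 t s ω))
                + pathWeight Q ω * (vnormSq (b - Q *ᵥ (Qᵀ *ᵥ b)) / r)) := by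
              exact Finset.sum_congr rfl fun ω _ => by ring
          _ = _ := by
              rw [Finset.sum_add_distrib, ← Finset.sum_mul, hsum, one_mul, ← Finset.mul_sum]

lemma EC_self_zero (hr : 0 < r) (hQ : Qᵀ * Q = 1) :
    ECV Q b y0 t 0 0 = vnormSq (y0 - Qᵀ *ᵥ b) := by
  unfold ECV
  have : ∀ ω : Fin t → Fin n, errV Q b y0 t 0 ω = y0 - Qᵀ *ᵥ b := fun ω => rfl
  calc ∑ ω : Fin t → Fin n, pathWeight Q ω * (errV Q b y0 t 0 ω ⬝ᵥ errV Q b y0 t 0 ω)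
      = ∑ ω : Fin t → Fin n, pathWeight Q ω * vnormSq (y0 - Qᵀ *ᵥ b) := by
        exact Finset.sum_congr rfl fun ω _ => by rw [this ω, ← vnormSq_eq_dot]
    _ = vnormSq (y0 - Qᵀ *ᵥ b) := by
        rw [← Finset.sum_mul, sum_pathWeight hr Q hQ, one_mul]

lemma EC_self_le (hr : 0 < r) (hQ : Qᵀ * Q = 1) :
    ∀ s, s ≤ t → ECV Q b y0 t s s ≤ (1 - 1/(r:ℝ))^s * vnormSq (y0 - Qᵀ *ᵥ b)
      + vnormSq (b - Q *ᵥ (Qᵀ *ᵥ b)) := by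
  intro s
  induction s with
  | zero =>
      intro _
      rw [EC_self_zero Q b y0 t hr hQ, pow_zero, one_mul]
      have := vnormSq_nonneg (b - Q *ᵥ (Qᵀ *ᵥ b))
      linarith
  | succ s ih =>
      intro hst
      have hs : s < t := by omega
      have h1 := EC_sq Q b y0 t hr hQ hs
      have h2 := ih (by omega)
      have hγ0 := gamma_nonneg hr
      have hmul : (1 - 1/(r:ℝ)) * ECV Q b y0 t s s
          ≤ (1 - 1/(r:ℝ)) * ((1 - 1/(r:ℝ))^s * vnormSq (y0 - Qᵀ *ᵥ b)
            + vnormSq (b - Q *ᵥ (Qᵀ *ᵥ b))) := mul_le_mul_of_nonneg_left h2 hγ0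
      have hrr : (0:ℝ) < r := Nat.cast_pos.2 hr
      have hid : (1 - 1/(r:ℝ)) * ((1 - 1/(r:ℝ))^s * vnormSq (y0 - Qᵀ *ᵥ b)
            + vnormSq (b - Q *ᵥ (Qᵀ *ᵥ b))) + vnormSq (b - Q *ᵥ (Qᵀ *ᵥ b)) / r
          = (1 - 1/(r:ℝ))^(s+1) * vnormSq (y0 - Qᵀ *ᵥ b)
            + vnormSq (b - Q *ᵥ (Qᵀ *ᵥ b)) := by
        rw [pow_succ]
        field_simp
        ring
      linarith

lemma EC_pow (hr : 0 < r) (hQ : Qᵀ * Q = 1) (s : ℕ) :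
    ∀ d, s + d ≤ t → ECV Q b y0 t s (s + d) = (1 - 1/(r:ℝ))^d * ECV Q b y0 t s s := by
  intro d
  induction d with
  | zero => intro _; rw [pow_zero, one_mul]; norm_num
  | succ d ih =>
      intro hd
      have h1 : s + d < t := by omega
      have h2 := EC_cross Q b y0 t hr hQ (show s ≤ s + d by omega) h1
      rw [show s + (d + 1) = (s + d) + 1 by omega, h2, ih (by omega), pow_succ]
      ring

lemma EC_pair (hr : 0 < r) (hQ : Qᵀ * Q = 1) (tb : ℕ) {s s' : ℕ}
    (h1 : tb ≤ s) (h2 : s ≤ s') (h3 : s' < t) :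
    ECV Q b y0 t s s' ≤ (1 - 1/(r:ℝ))^tb * vnormSq (y0 - Qᵀ *ᵥ b)
      + (1 - 1/(r:ℝ))^(s' - s) * vnormSq (b - Q *ᵥ (Qᵀ *ᵥ b)) := by
  have hγ0 := gamma_nonneg hr
  have hγ1 := gamma_le_one hr
  have hd : s' = s + (s' - s) := by omega
  have hpow := EC_pow Q b y0 t hr hQ s (s' - s) (by omega)
  conv_lhs => rw [hd]
  rw [hpow]
  have hself := EC_self_le Q b y0 t hr hQ s (by omega)
  have hmul : (1 - 1/(r:ℝ))^(s' - s) * ECV Q b y0 t s s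
      ≤ (1 - 1/(r:ℝ))^(s' - s) * ((1 - 1/(r:ℝ))^s * vnormSq (y0 - Qᵀ *ᵥ b)
        + vnormSq (b - Q *ᵥ (Qᵀ *ᵥ b))) :=
    mul_le_mul_of_nonneg_left hself (pow_nonneg hγ0 _)
  have hcollapse : (1 - 1/(r:ℝ))^(s' - s) * (1 - 1/(r:ℝ))^s = (1 - 1/(r:ℝ))^(s' - s + s) :=
    (pow_add _ _ _).symm
  have htble : (1 - 1/(r:ℝ))^(s' - s + s) ≤ (1 - 1/(r:ℝ))^tb :=
    pow_le_pow_of_le_one hγ0 hγ1 (by omega)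
  have hE0 := vnormSq_nonneg (y0 - Qᵀ *ᵥ b)
  calc (1 - 1/(r:ℝ))^(s' - s) * ECV Q b y0 t s s
      ≤ (1 - 1/(r:ℝ))^(s' - s) * ((1 - 1/(r:ℝ))^s * vnormSq (y0 - Qᵀ *ᵥ b)
        + vnormSq (b - Q *ᵥ (Qᵀ *ᵥ b))) := hmul
    _ = (1 - 1/(r:ℝ))^(s' - s + s) * vnormSq (y0 - Qᵀ *ᵥ b)
        + (1 - 1/(r:ℝ))^(s' - s) * vnormSq (b - Q *ᵥ (Qᵀ *ᵥ b)) := by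
        rw [mul_add, ← mul_assoc, hcollapse]
    _ ≤ (1 - 1/(r:ℝ))^tb * vnormSq (y0 - Qᵀ *ᵥ b)
        + (1 - 1/(r:ℝ))^(s' - s) * vnormSq (b - Q *ᵥ (Qᵀ *ᵥ b)) :=
        add_le_add_left (mul_le_mul_of_nonneg_right htble hE0) _

lemma EC_pair_sym (hr : 0 < r) (hQ : Qᵀ * Q = 1) (tb : ℕ) {s s' : ℕ}
    (h1 : tb ≤ s) (h1' : tb ≤ s') (h3 : s < t) (h3' : s' < t) :
    ECV Q b y0 t s s' ≤ (1 - 1/(r:ℝ))^tb * vnormSq (y0 - Qᵀ *ᵥ b)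
      + (1 - 1/(r:ℝ))^((s' - s) + (s - s')) * vnormSq (b - Q *ᵥ (Qᵀ *ᵥ b)) := by
  rcases le_total s s' with h | h
  · have := EC_pair Q b y0 t hr hQ tb h1 h h3'
    rw [show (s' - s) + (s - s') = s' - s by omega]
    exact this
  · rw [EC_symm]
    have := EC_pair Q b y0 t hr hQ tb h1' h h3
    rw [show (s' - s) + (s - s') = s - s' by omega]
    exact this

end Core

section Inner

lemma inner_geom (hr : 0 < r) (tb t s : ℕ) (hs : s ∈ Finset.Ico tb t) :
    ∑ s' ∈ Finset.Ico tb t, (1 - 1/(r:ℝ))^((s' - s) + (s - s')) ≤ 2 * (r:ℝ) - 1 := by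
  obtain ⟨hs1, hs2⟩ := Finset.mem_Ico.1 hs
  have hγ0 := gamma_nonneg hr
  have hrr : (0:ℝ) < r := Nat.cast_pos.2 hr
  rw [← Finset.sum_Ico_consecutive _ (show tb ≤ s + 1 by omega) (show s + 1 ≤ t by omega)]
  have hSum1 : ∑ s' ∈ Finset.Ico tb (s+1), (1 - 1/(r:ℝ))^((s' - s) + (s - s')) ≤ (r:ℝ) := by
    have e1 : ∑ s' ∈ Finset.Ico tb (s+1), (1 - 1/(r:ℝ))^((s' - s) + (s - s'))
        = ∑ s' ∈ Finset.Ico tb (s+1), (1 - 1/(r:ℝ))^(s - s') :=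
      Finset.sum_congr rfl fun s' hs' => by
        have := Finset.mem_Ico.1 hs'
        congr 1
        omega
    rw [e1, Finset.sum_Ico_eq_sum_range]
    have e2 : ∑ k ∈ Finset.range (s + 1 - tb), (1 - 1/(r:ℝ))^(s - (tb + k))
        = ∑ k ∈ Finset.range (s + 1 - tb), (1 - 1/(r:ℝ))^((s + 1 - tb) - 1 - k) :=
      Finset.sum_congr rfl fun k hk => by
        have := Finset.mem_range.1 hk
        congr 1
        omega
    rw [e2, Finset.sum_range_reflect (fun j => (1 - 1/(r:ℝ))^j) (s + 1 - tb)]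
    exact geom_le hr _
  have hSum2 : ∑ s' ∈ Finset.Ico (s+1) t, (1 - 1/(r:ℝ))^((s' - s) + (s - s')) ≤ (r:ℝ) - 1 := by
    have e1 : ∑ s' ∈ Finset.Ico (s+1) t, (1 - 1/(r:ℝ))^((s' - s) + (s - s'))
        = ∑ s' ∈ Finset.Ico (s+1) t, (1 - 1/(r:ℝ))^(s' - s) :=
      Finset.sum_congr rfl fun s' hs' => by
        have := Finset.mem_Ico.1 hs'
        congr 1
        omega
    rw [e1, Finset.sum_Ico_eq_sum_range]
    have e2 : ∑ k ∈ Finset.range (t - (s + 1)), (1 - 1/(r:ℝ))^((s + 1 + k) - s)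
        = ∑ k ∈ Finset.range (t - (s + 1)), (1 - 1/(r:ℝ))^k * (1 - 1/(r:ℝ)) :=
      Finset.sum_congr rfl fun k hk => by
        rw [show (s + 1 + k) - s = k + 1 by omega, pow_succ]
    rw [e2, ← Finset.sum_mul]
    have h1 := geom_le hr (t - (s + 1))
    have h2 : (∑ k ∈ Finset.range (t - (s+1)), (1 - 1/(r:ℝ))^k) * (1 - 1/(r:ℝ))
        ≤ (r:ℝ) * (1 - 1/(r:ℝ)) := mul_le_mul_of_nonneg_right h1 hγ0
    have h3 : (r:ℝ) * (1 - 1/(r:ℝ)) = (r:ℝ) - 1 := by field_simp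
    linarith
  linarith

end Inner

section Conditional
variable (Q : Matrix (Fin n) (Fin r) ℝ) (b : Fin n → ℝ) (y0 : Fin r → ℝ)

lemma conditional_tark (hr : 0 < r) (hQ : Qᵀ * Q = 1) (tb t : ℕ) (htb : tb < t) :
    ∑ ω : Fin t → Fin n, pathWeight Q ω *
        vnormSq (b - Q *ᵥ ((((t : ℝ) - (tb : ℝ))⁻¹) •
          (∑ s ∈ Finset.Ico tb t, rkSeq Q b y0 (extendPath ω) s)))
      ≤ (1 + (2 * (r : ℝ) - 1) / ((t : ℝ) - (tb : ℝ))) * vnormSq (b - Q *ᵥ (Qᵀ *ᵥ b))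
        + (1 - 1/(r:ℝ)) ^ tb * vnormSq (y0 - Qᵀ *ᵥ b) := by
  have hγ0 := gamma_nonneg hr
  have hrr : (0:ℝ) < r := Nat.cast_pos.2 hr
  have hmN : ((t - tb : ℕ) : ℝ) = (t:ℝ) - (tb:ℝ) := Nat.cast_sub htb.le
  have hm0 : 0 < t - tb := by omega
  have hN0 : (0:ℝ) < (t:ℝ) - (tb:ℝ) := by
    rw [← hmN]; exact_mod_cast hm0
  have hR0 : 0 ≤ vnormSq (b - Q *ᵥ (Qᵀ *ᵥ b)) := vnormSq_nonneg _
  have hE00 : 0 ≤ vnormSq (y0 - Qᵀ *ᵥ b) := vnormSq_nonneg _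
  -- pointwise Pythagoras + expansion
  have hkey : ∀ ω : Fin t → Fin n,
      vnormSq (b - Q *ᵥ ((((t:ℝ) - (tb:ℝ))⁻¹) •
          (∑ s ∈ Finset.Ico tb t, rkSeq Q b y0 (extendPath ω) s)))
      = vnormSq (b - Q *ᵥ (Qᵀ *ᵥ b)) + (((t:ℝ) - (tb:ℝ))⁻¹)^2 *
          ∑ s ∈ Finset.Ico tb t, ∑ s' ∈ Finset.Ico tb t,
            (errV Q b y0 t s ω ⬝ᵥ errV Q b y0 t s' ω) := by
    intro ω
    rw [pythagoras Q b hQ]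
    congr 1
    have havg : ((((t:ℝ) - (tb:ℝ))⁻¹) • ∑ s ∈ Finset.Ico tb t, rkSeq Q b y0 (extendPath ω) s)
          - Qᵀ *ᵥ b
        = (((t:ℝ) - (tb:ℝ))⁻¹) • ∑ s ∈ Finset.Ico tb t, errV Q b y0 t s ω := by
      simp only [errV]
      rw [Finset.sum_sub_distrib, Finset.sum_const, Nat.card_Ico, smul_sub]
      congr 1
      rw [← Nat.cast_smul_eq_nsmul ℝ (t - tb), smul_smul, hmN,
        inv_mul_cancel₀ hN0.ne', one_smul]
    rw [havg, vnormSq_smul, vnormSq_eq_dot, sum_dotProduct']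
    congr 1
    refine Finset.sum_congr rfl fun s _ => ?_
    exact dotProduct_sum' _ _ _
  rw [Finset.sum_congr rfl fun ω _ => by rw [hkey ω]]
  -- split the sum
  have hsplit : ∑ ω : Fin t → Fin n, pathWeight Q ω *
      (vnormSq (b - Q *ᵥ (Qᵀ *ᵥ b)) + (((t:ℝ) - (tb:ℝ))⁻¹)^2 *
        ∑ s ∈ Finset.Ico tb t, ∑ s' ∈ Finset.Ico tb t,
          (errV Q b y0 t s ω ⬝ᵥ errV Q b y0 t s' ω))
      = vnormSq (b - Q *ᵥ (Qᵀ *ᵥ b)) + (((t:ℝ) - (tb:ℝ))⁻¹)^2 *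
          ∑ s ∈ Finset.Ico tb t, ∑ s' ∈ Finset.Ico tb t, ECV Q b y0 t s s' := by
    have e1 : ∀ ω : Fin t → Fin n, pathWeight Q ω *
        (vnormSq (b - Q *ᵥ (Qᵀ *ᵥ b)) + (((t:ℝ) - (tb:ℝ))⁻¹)^2 *
          ∑ s ∈ Finset.Ico tb t, ∑ s' ∈ Finset.Ico tb t,
            (errV Q b y0 t s ω ⬝ᵥ errV Q b y0 t s' ω))
        = pathWeight Q ω * vnormSq (b - Q *ᵥ (Qᵀ *ᵥ b)) + (((t:ℝ) - (tb:ℝ))⁻¹)^2 *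
            ∑ s ∈ Finset.Ico tb t, ∑ s' ∈ Finset.Ico tb t,
              pathWeight Q ω * (errV Q b y0 t s ω ⬝ᵥ errV Q b y0 t s' ω) := by
      intro ω
      rw [mul_add]
      congr 1
      rw [show pathWeight Q ω * ((((t:ℝ) - (tb:ℝ))⁻¹)^2 *
          ∑ s ∈ Finset.Ico tb t, ∑ s' ∈ Finset.Ico tb t,
            (errV Q b y0 t s ω ⬝ᵥ errV Q b y0 t s' ω))
        = (((t:ℝ) - (tb:ℝ))⁻¹)^2 * (pathWeight Q ω *
          ∑ s ∈ Finset.Ico tb t, ∑ s' ∈ Finset.Ico tb t,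
            (errV Q b y0 t s ω ⬝ᵥ errV Q b y0 t s' ω)) by ring]
      congr 1
      rw [Finset.mul_sum]
      exact Finset.sum_congr rfl fun s _ => Finset.mul_sum _ _ _
    rw [Finset.sum_congr rfl fun ω _ => e1 ω, Finset.sum_add_distrib, ← Finset.sum_mul,
      sum_pathWeight hr Q hQ, one_mul, ← Finset.mul_sum]
    congr 1
    rw [Finset.sum_comm]
    refine congrArg _ (Finset.sum_congr rfl fun s _ => ?_)
    rw [Finset.sum_comm]
    rfl
  rw [hsplit]
  -- bound the double sum
  have hdouble : ∑ s ∈ Finset.Ico tb t, ∑ s' ∈ Finset.Ico tb t, ECV Q b y0 t s s'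
      ≤ ((t - tb : ℕ) : ℝ) * (((t - tb : ℕ) : ℝ) * ((1 - 1/(r:ℝ))^tb * vnormSq (y0 - Qᵀ *ᵥ b))
          + (2 * (r:ℝ) - 1) * vnormSq (b - Q *ᵥ (Qᵀ *ᵥ b))) := by
    have hper : ∀ s ∈ Finset.Ico tb t, ∑ s' ∈ Finset.Ico tb t, ECV Q b y0 t s s'
        ≤ ((t - tb : ℕ) : ℝ) * ((1 - 1/(r:ℝ))^tb * vnormSq (y0 - Qᵀ *ᵥ b))
          + (2 * (r:ℝ) - 1) * vnormSq (b - Q *ᵥ (Qᵀ *ᵥ b)) := by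
      intro s hs
      obtain ⟨hs1, hs2⟩ := Finset.mem_Ico.1 hs
      have h1 : ∑ s' ∈ Finset.Ico tb t, ECV Q b y0 t s s'
          ≤ ∑ s' ∈ Finset.Ico tb t, ((1 - 1/(r:ℝ))^tb * vnormSq (y0 - Qᵀ *ᵥ b)
            + (1 - 1/(r:ℝ))^((s' - s) + (s - s')) * vnormSq (b - Q *ᵥ (Qᵀ *ᵥ b))) := by
        refine Finset.sum_le_sum fun s' hs' => ?_
        obtain ⟨hs1', hs2'⟩ := Finset.mem_Ico.1 hs'
        exact EC_pair_sym Q b y0 t hr hQ tb hs1 hs1' hs2 hs2'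
      rw [Finset.sum_add_distrib, Finset.sum_const, Nat.card_Ico, nsmul_eq_mul,
        ← Finset.sum_mul] at h1
      have h2 : (∑ s' ∈ Finset.Ico tb t, (1 - 1/(r:ℝ))^((s' - s) + (s - s')))
            * vnormSq (b - Q *ᵥ (Qᵀ *ᵥ b))
          ≤ (2 * (r:ℝ) - 1) * vnormSq (b - Q *ᵥ (Qᵀ *ᵥ b)) :=
        mul_le_mul_of_nonneg_right (inner_geom hr tb t s hs) hR0
      linarith
    calc ∑ s ∈ Finset.Ico tb t, ∑ s' ∈ Finset.Ico tb t, ECV Q b y0 t s s'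
        ≤ ∑ _s ∈ Finset.Ico tb t, (((t - tb : ℕ) : ℝ) * ((1 - 1/(r:ℝ))^tb * vnormSq (y0 - Qᵀ *ᵥ b))
            + (2 * (r:ℝ) - 1) * vnormSq (b - Q *ᵥ (Qᵀ *ᵥ b))) :=
          Finset.sum_le_sum hper
      _ = _ := by
          rw [Finset.sum_const, Nat.card_Ico, nsmul_eq_mul]
  have hc : (0:ℝ) ≤ (((t:ℝ) - (tb:ℝ))⁻¹)^2 := by positivity
  have hfin : vnormSq (b - Q *ᵥ (Qᵀ *ᵥ b)) + (((t:ℝ) - (tb:ℝ))⁻¹)^2 *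
      (((t - tb : ℕ) : ℝ) * (((t - tb : ℕ) : ℝ) * ((1 - 1/(r:ℝ))^tb * vnormSq (y0 - Qᵀ *ᵥ b))
        + (2 * (r:ℝ) - 1) * vnormSq (b - Q *ᵥ (Qᵀ *ᵥ b))))
      = (1 + (2 * (r : ℝ) - 1) / ((t : ℝ) - (tb : ℝ))) * vnormSq (b - Q *ᵥ (Qᵀ *ᵥ b))
        + (1 - 1/(r:ℝ)) ^ tb * vnormSq (y0 - Qᵀ *ᵥ b) := by
    rw [hmN]
    field_simp
    ring
  calc vnormSq (b - Q *ᵥ (Qᵀ *ᵥ b)) + (((t:ℝ) - (tb:ℝ))⁻¹)^2 *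
        ∑ s ∈ Finset.Ico tb t, ∑ s' ∈ Finset.Ico tb t, ECV Q b y0 t s s'
      ≤ vnormSq (b - Q *ᵥ (Qᵀ *ᵥ b)) + (((t:ℝ) - (tb:ℝ))⁻¹)^2 *
        (((t - tb : ℕ) : ℝ) * (((t - tb : ℕ) : ℝ) * ((1 - 1/(r:ℝ))^tb * vnormSq (y0 - Qᵀ *ᵥ b))
          + (2 * (r:ℝ) - 1) * vnormSq (b - Q *ᵥ (Qᵀ *ᵥ b)))) :=
        add_le_add_right (mul_le_mul_of_nonneg_left hdouble hc) _
    _ = _ := hfin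

end Conditional
end TarkAux

/-- preconditioned TARK. If Q has orthonormal columns and the (random)
initialization y_0 satisfies E‖y_0 - y⋆‖² ≤ r ‖b - Qy⋆‖², then the TARK tail average
satisfies E‖b - Q ȳ_t‖² ≤ [1 + (1 - 1/r)^{t_b} r + (2r-1)/(t - t_b)] ‖b - Qy⋆‖². -/
theorem preconditioned_tark {n r : ℕ} [NeZero n] (hr : 0 < r)
    (Q : Matrix (Fin n) (Fin r) ℝ) (hQ : Qᵀ * Q = 1) (b : Fin n → ℝ)
    (Ω : Type) [Fintype Ω] (w : Ω → ℝ) (hw0 : ∀ o, 0 ≤ w o) (hw1 : ∑ o, w o = 1)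
    (y0 : Ω → Fin r → ℝ)
    (hinit : ∑ o, w o * vnormSq (y0 o - Qᵀ *ᵥ b)
      ≤ (r : ℝ) * vnormSq (b - Q *ᵥ (Qᵀ *ᵥ b)))
    (tb t : ℕ) (htb : tb < t) :
    ∑ o, ∑ ω : Fin t → Fin n, w o * pathWeight Q ω *
        vnormSq (b - Q *ᵥ ((((t : ℝ) - (tb : ℝ))⁻¹) •
          (∑ s ∈ Finset.Ico tb t, rkSeq Q b (y0 o) (extendPath ω) s)))
      ≤ (1 + (1 - 1 / (r : ℝ)) ^ tb * (r : ℝ) + (2 * (r : ℝ) - 1) / ((t : ℝ) - (tb : ℝ))) *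
          vnormSq (b - Q *ᵥ (Qᵀ *ᵥ b)) := by
  have hγ0 : (0:ℝ) ≤ (1 - 1/(r:ℝ))^tb := pow_nonneg (TarkAux.gamma_nonneg hr) tb
  calc ∑ o, ∑ ω : Fin t → Fin n, w o * pathWeight Q ω *
        vnormSq (b - Q *ᵥ ((((t : ℝ) - (tb : ℝ))⁻¹) •
          (∑ s ∈ Finset.Ico tb t, rkSeq Q b (y0 o) (extendPath ω) s)))
      = ∑ o, w o * ∑ ω : Fin t → Fin n, pathWeight Q ω *
          vnormSq (b - Q *ᵥ ((((t : ℝ) - (tb : ℝ))⁻¹) •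
            (∑ s ∈ Finset.Ico tb t, rkSeq Q b (y0 o) (extendPath ω) s))) := by
        refine Finset.sum_congr rfl fun o _ => ?_
        rw [Finset.mul_sum]
        exact Finset.sum_congr rfl fun ω _ => by ring
    _ ≤ ∑ o, w o * ((1 + (2 * (r : ℝ) - 1) / ((t : ℝ) - (tb : ℝ)))
            * vnormSq (b - Q *ᵥ (Qᵀ *ᵥ b))
          + (1 - 1/(r:ℝ)) ^ tb * vnormSq (y0 o - Qᵀ *ᵥ b)) :=
        Finset.sum_le_sum fun o _ => mul_le_mul_of_nonneg_left
          (TarkAux.conditional_tark Q b (y0 o) hr hQ tb t htb) (hw0 o)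
    _ = (1 + (2 * (r : ℝ) - 1) / ((t : ℝ) - (tb : ℝ))) * vnormSq (b - Q *ᵥ (Qᵀ *ᵥ b))
          + (1 - 1/(r:ℝ)) ^ tb * ∑ o, w o * vnormSq (y0 o - Qᵀ *ᵥ b) := by
        have hform : ∀ o, w o * ((1 + (2 * (r : ℝ) - 1) / ((t : ℝ) - (tb : ℝ)))
              * vnormSq (b - Q *ᵥ (Qᵀ *ᵥ b))
            + (1 - 1/(r:ℝ)) ^ tb * vnormSq (y0 o - Qᵀ *ᵥ b))
            = ((1 + (2 * (r : ℝ) - 1) / ((t : ℝ) - (tb : ℝ)))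
                * vnormSq (b - Q *ᵥ (Qᵀ *ᵥ b))) * w o
              + (1 - 1/(r:ℝ)) ^ tb * (w o * vnormSq (y0 o - Qᵀ *ᵥ b)) := fun o => by ring
        rw [Finset.sum_congr rfl fun o _ => hform o, Finset.sum_add_distrib,
          ← Finset.mul_sum, hw1, mul_one, ← Finset.mul_sum]
    _ ≤ (1 + (2 * (r : ℝ) - 1) / ((t : ℝ) - (tb : ℝ))) * vnormSq (b - Q *ᵥ (Qᵀ *ᵥ b))
          + (1 - 1/(r:ℝ)) ^ tb * ((r : ℝ) * vnormSq (b - Q *ᵥ (Qᵀ *ᵥ b))) :=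
        add_le_add_right (mul_le_mul_of_nonneg_left hinit hγ0) _
    _ = (1 + (1 - 1 / (r : ℝ)) ^ tb * (r : ℝ) + (2 * (r : ℝ) - 1) / ((t : ℝ) - (tb : ℝ))) *
          vnormSq (b - Q *ᵥ (Qᵀ *ᵥ b)) := by ring
end
end
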